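/- arXiv:2207.03627 — 3 statements merged into one kernel-verified Lean document; each statement's English description precedes it below -/
import Mathlib

section
/- The edge expansion of the graph of the d-dimensional hypercube is at least 1: for every nonempty subset S of {0,1}^d with |S| ≤ 2^{d-1}, the number of hypercube edges with exactly one endpoint in S is at least |S|. -/
open scoped Classical

/-- Two vertices of the hypercube `{0,1}^d` are adjacent iff they differ in exactly
one coordinate. -/
def CubeAdj {d : ℕ} (u v : Fin d → Fin 2) : Prop :=
  (Finset.univ.filter fun i => u i ≠ v i).card = 1

namespace CubeExp

noncomputable def E (d : ℕ) (S : Finset (Fin d → Fin 2)) : ℕ :=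
  ((Finset.univ : Finset ((Fin d → Fin 2) × (Fin d → Fin 2))).filter
    fun e => e.1 ∈ S ∧ e.2 ∉ S ∧ CubeAdj e.1 e.2).card

lemma adj_symm {d} {u v : Fin d → Fin 2} (h : CubeAdj u v) : CubeAdj v u := by
  unfold CubeAdj at *
  have he : (Finset.univ.filter fun i => v i ≠ u i)
      = (Finset.univ.filter fun i => u i ≠ v i) := by
    apply Finset.filter_congr; intro i _; simp [ne_comm]
  rw [he]; exact h

lemma adj_snoc_same {d} (x y : Fin d → Fin 2) (a : Fin 2) :
    CubeAdj (Fin.snoc x a) (Fin.snoc y a) ↔ CubeAdj x y := by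
  unfold CubeAdj
  rw [Finset.card_filter, Finset.card_filter, Fin.sum_univ_castSucc]
  simp

lemma adj_snoc_diff {d} (x y : Fin d → Fin 2) (a b : Fin 2) (hab : a ≠ b) :
    CubeAdj (Fin.snoc x a) (Fin.snoc y b) ↔ x = y := by
  unfold CubeAdj
  rw [Finset.card_filter, Fin.sum_univ_castSucc]
  simp only [Fin.snoc_castSucc, Fin.snoc_last]
  rw [if_pos hab]
  constructor
  · intro h
    have h0 : (∑ i : Fin d, if x i ≠ y i then 1 else 0) = 0 := by omega
    funext i
    have hz := (Finset.sum_eq_zero_iff.mp h0) i (Finset.mem_univ i)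
    by_contra hne
    rw [if_pos hne] at hz; omega
  · intro h; subst h; simp

lemma compl_E {d} (S : Finset (Fin d → Fin 2)) : E d Sᶜ = E d S := by
  unfold E
  refine Finset.card_nbij' (fun e => (e.2, e.1)) (fun e => (e.2, e.1)) ?_ ?_ ?_ ?_
  · intro e he
    simp only [Finset.mem_coe, Finset.mem_filter, Finset.mem_univ, true_and, Finset.mem_compl,
      not_not] at he ⊢
    exact ⟨he.2.1, he.1, adj_symm he.2.2⟩
  · intro e he
    simp only [Finset.mem_coe, Finset.mem_filter, Finset.mem_univ, true_and, Finset.mem_compl,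
      not_not] at he ⊢
    exact ⟨he.2.1, he.1, adj_symm he.2.2⟩
  · intro e _; rfl
  · intro e _; rfl

lemma fiber_card {d} (S : Finset (Fin (d + 1) → Fin 2)) (a : Fin 2) :
    (S.filter fun u => u (Fin.last d) = a).card
      = (Finset.univ.filter fun x : Fin d → Fin 2 => Fin.snoc x a ∈ S).card := by
  refine Finset.card_nbij' Fin.init (fun x => Fin.snoc x a) ?_ ?_ ?_ ?_
  · intro u hu
    simp only [Finset.mem_coe, Finset.mem_filter, Finset.mem_univ, true_and] at hu ⊢
    rw [← hu.2, Fin.snoc_init_self]; exact hu.1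
  · intro x hx
    simp only [Finset.mem_coe, Finset.mem_filter, Finset.mem_univ, true_and] at hx ⊢
    exact ⟨hx, by simp⟩
  · intro u hu
    simp only [Finset.mem_coe, Finset.mem_filter] at hu
    rw [← hu.2]
    exact Fin.snoc_init_self u
  · intro x _; simp

lemma card_split {d} (S : Finset (Fin (d + 1) → Fin 2)) :
    S.card = (Finset.univ.filter fun x : Fin d → Fin 2 => Fin.snoc x 0 ∈ S).card
      + (Finset.univ.filter fun x : Fin d → Fin 2 => Fin.snoc x 1 ∈ S).card := by
  have h := Finset.card_eq_sum_card_fiberwise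
    (f := fun u : Fin (d + 1) → Fin 2 => u (Fin.last d)) (s := S)
    (t := (Finset.univ : Finset (Fin 2))) (fun x _ => Finset.mem_univ _)
  rw [h, Fin.sum_univ_two, fiber_card, fiber_card]

end CubeExp

namespace CubeExp

variable {d : ℕ}

lemma c_same (S : Finset (Fin (d + 1) → Fin 2)) (a : Fin 2) :
    (((Finset.univ : Finset ((Fin (d+1) → Fin 2) × (Fin (d+1) → Fin 2))).filter
        fun e => e.1 ∈ S ∧ e.2 ∉ S ∧ CubeAdj e.1 e.2).filter
        fun e => e.1 (Fin.last d) = a ∧ e.2 (Fin.last d) = a).card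
      = E d (Finset.univ.filter fun x : Fin d → Fin 2 => Fin.snoc x a ∈ S) := by
  unfold E
  refine Finset.card_nbij' (fun e => (Fin.init e.1, Fin.init e.2))
    (fun p => (Fin.snoc p.1 a, Fin.snoc p.2 a)) ?_ ?_ ?_ ?_
  · intro e he
    simp only [Finset.mem_coe, Finset.mem_filter, Finset.mem_univ, true_and] at he ⊢
    obtain ⟨⟨h1, h2, h3⟩, ha, hb⟩ := he
    have e1 : Fin.snoc (Fin.init e.1) a = e.1 := by rw [← ha]; exact Fin.snoc_init_self e.1
    have e2 : Fin.snoc (Fin.init e.2) a = e.2 := by rw [← hb]; exact Fin.snoc_init_self e.2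
    refine ⟨by rw [e1]; exact h1, by rw [e2]; exact h2, ?_⟩
    have : CubeAdj (Fin.snoc (Fin.init e.1) a) (Fin.snoc (Fin.init e.2) a) := by
      rw [e1, e2]; exact h3
    exact (adj_snoc_same _ _ a).mp this
  · intro p hp
    simp only [Finset.mem_coe, Finset.mem_filter, Finset.mem_univ, true_and] at hp ⊢
    exact ⟨⟨hp.1, hp.2.1, (adj_snoc_same _ _ a).mpr hp.2.2⟩, by simp, by simp⟩
  · intro e he
    simp only [Finset.mem_coe, Finset.mem_filter] at he
    obtain ⟨_, ha, hb⟩ := he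
    have e1 : Fin.snoc (Fin.init e.1) a = e.1 := by rw [← ha]; exact Fin.snoc_init_self e.1
    have e2 : Fin.snoc (Fin.init e.2) a = e.2 := by rw [← hb]; exact Fin.snoc_init_self e.2
    simpa using Prod.ext e1 e2
  · intro p _
    simp

lemma c_diff (S : Finset (Fin (d + 1) → Fin 2)) (a b : Fin 2) (hab : a ≠ b) :
    (((Finset.univ : Finset ((Fin (d+1) → Fin 2) × (Fin (d+1) → Fin 2))).filter
        fun e => e.1 ∈ S ∧ e.2 ∉ S ∧ CubeAdj e.1 e.2).filter
        fun e => e.1 (Fin.last d) = a ∧ e.2 (Fin.last d) = b).card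
      = ((Finset.univ.filter fun x : Fin d → Fin 2 => Fin.snoc x a ∈ S) \
         (Finset.univ.filter fun x : Fin d → Fin 2 => Fin.snoc x b ∈ S)).card := by
  refine Finset.card_nbij' (fun e => Fin.init e.1)
    (fun x => (Fin.snoc x a, Fin.snoc x b)) ?_ ?_ ?_ ?_
  · intro e he
    simp only [Finset.mem_coe, Finset.mem_filter, Finset.mem_univ, true_and, Finset.mem_sdiff] at he ⊢
    obtain ⟨⟨h1, h2, h3⟩, ha, hb⟩ := he
    have e1 : Fin.snoc (Fin.init e.1) a = e.1 := by rw [← ha]; exact Fin.snoc_init_self e.1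
    have e2 : Fin.snoc (Fin.init e.2) b = e.2 := by rw [← hb]; exact Fin.snoc_init_self e.2
    have hadj : CubeAdj (Fin.snoc (Fin.init e.1) a) (Fin.snoc (Fin.init e.2) b) := by
      rw [e1, e2]; exact h3
    have hxy : Fin.init e.1 = Fin.init e.2 := (adj_snoc_diff _ _ a b hab).mp hadj
    refine ⟨by rw [e1]; exact h1, ?_⟩
    rw [hxy, e2]; exact h2
  · intro x hx
    simp only [Finset.mem_coe, Finset.mem_filter, Finset.mem_univ, true_and, Finset.mem_sdiff] at hx ⊢
    exact ⟨⟨hx.1, hx.2, (adj_snoc_diff x x a b hab).mpr rfl⟩, by simp, by simp⟩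
  · intro e he
    simp only [Finset.mem_coe, Finset.mem_filter, Finset.mem_univ, true_and] at he
    obtain ⟨⟨h1, h2, h3⟩, ha, hb⟩ := he
    have e1 : Fin.snoc (Fin.init e.1) a = e.1 := by rw [← ha]; exact Fin.snoc_init_self e.1
    have e2 : Fin.snoc (Fin.init e.2) b = e.2 := by rw [← hb]; exact Fin.snoc_init_self e.2
    have hadj : CubeAdj (Fin.snoc (Fin.init e.1) a) (Fin.snoc (Fin.init e.2) b) := by
      rw [e1, e2]; exact h3
    have hxy : Fin.init e.1 = Fin.init e.2 := (adj_snoc_diff _ _ a b hab).mp hadj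
    have e2' : Fin.snoc (Fin.init e.1) b = e.2 := by rw [hxy]; exact e2
    simpa using Prod.ext e1 e2'
  · intro x _
    simp

lemma E_split (S : Finset (Fin (d + 1) → Fin 2)) :
    E (d+1) S = E d (Finset.univ.filter fun x : Fin d → Fin 2 => Fin.snoc x 0 ∈ S)
      + E d (Finset.univ.filter fun x : Fin d → Fin 2 => Fin.snoc x 1 ∈ S)
      + ((Finset.univ.filter fun x : Fin d → Fin 2 => Fin.snoc x 0 ∈ S) \
         (Finset.univ.filter fun x : Fin d → Fin 2 => Fin.snoc x 1 ∈ S)).card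
      + ((Finset.univ.filter fun x : Fin d → Fin 2 => Fin.snoc x 1 ∈ S) \
         (Finset.univ.filter fun x : Fin d → Fin 2 => Fin.snoc x 0 ∈ S)).card := by
  have h := Finset.card_eq_sum_card_fiberwise
    (f := fun e : (Fin (d+1) → Fin 2) × (Fin (d+1) → Fin 2) =>
      (e.1 (Fin.last d), e.2 (Fin.last d)))
    (s := ((Finset.univ : Finset ((Fin (d+1) → Fin 2) × (Fin (d+1) → Fin 2))).filter
        fun e => e.1 ∈ S ∧ e.2 ∉ S ∧ CubeAdj e.1 e.2))
    (t := (Finset.univ : Finset (Fin 2 × Fin 2))) (fun x _ => Finset.mem_univ _)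
  have hfib : ∀ a b : Fin 2,
      (((Finset.univ : Finset ((Fin (d+1) → Fin 2) × (Fin (d+1) → Fin 2))).filter
        fun e => e.1 ∈ S ∧ e.2 ∉ S ∧ CubeAdj e.1 e.2).filter
        fun e => (e.1 (Fin.last d), e.2 (Fin.last d)) = (a, b))
      = (((Finset.univ : Finset ((Fin (d+1) → Fin 2) × (Fin (d+1) → Fin 2))).filter
        fun e => e.1 ∈ S ∧ e.2 ∉ S ∧ CubeAdj e.1 e.2).filter
        fun e => e.1 (Fin.last d) = a ∧ e.2 (Fin.last d) = b) := by
    intro a b; apply Finset.filter_congr; intro e _; simp [Prod.ext_iff]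
  rw [Fintype.sum_prod_type, Fin.sum_univ_two, Fin.sum_univ_two, Fin.sum_univ_two,
    hfib, hfib, hfib, hfib] at h
  have h' : E (d+1) S = _ := h
  rw [h', c_same S 0, c_same S 1, c_diff S 0 1 (by decide), c_diff S 1 0 (by decide)]
  ring

end CubeExp

namespace CubeExp

lemma main : ∀ (d : ℕ) (S : Finset (Fin d → Fin 2)), 2 * S.card ≤ 2 ^ d →
    S.card ≤ E d S := by
  intro d
  induction d with
  | zero =>
    intro S h
    simp only [pow_zero] at h
    have : S.card = 0 := by omega
    simp [this]
  | succ d ih =>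
    intro S h
    set S0 := (Finset.univ.filter fun x : Fin d → Fin 2 => Fin.snoc x 0 ∈ S) with hS0
    set S1 := (Finset.univ.filter fun x : Fin d → Fin 2 => Fin.snoc x 1 ∈ S) with hS1
    have hsplit : S.card = S0.card + S1.card := card_split S
    have hE : E (d+1) S = E d S0 + E d S1 + (S0 \ S1).card + (S1 \ S0).card := E_split S
    have hpow : (2 : ℕ) ^ (d + 1) = 2 * 2 ^ d := by ring
    have hcard : Fintype.card (Fin d → Fin 2) = 2 ^ d := by
      simp [Fintype.card_fun]
    by_cases h0 : 2 * S0.card ≤ 2 ^ d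
    · by_cases h1 : 2 * S1.card ≤ 2 ^ d
      · have i0 := ih S0 h0
        have i1 := ih S1 h1
        omega
      · -- S1 is big
        have i0 := ih S0 h0
        have hle : S1.card ≤ 2 ^ d := by
          have := Finset.card_le_univ S1
          rwa [hcard] at this
        have hc : S1ᶜ.card = 2 ^ d - S1.card := by
          rw [Finset.card_compl, hcard]
        have i1 : S1ᶜ.card ≤ E d S1 := by
          rw [← compl_E]
          exact ih S1ᶜ (by omega)
        have hcross : S1.card ≤ (S1 \ S0).card + S0.card :=
          Finset.card_le_card_sdiff_add_card
        omega
    · -- S0 is big, so S1 is small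
      have h1 : 2 * S1.card ≤ 2 ^ d := by omega
      have i1 := ih S1 h1
      have hle : S0.card ≤ 2 ^ d := by
        have := Finset.card_le_univ S0
        rwa [hcard] at this
      have hc : S0ᶜ.card = 2 ^ d - S0.card := by
        rw [Finset.card_compl, hcard]
      have i0 : S0ᶜ.card ≤ E d S0 := by
        rw [← compl_E]
        exact ih S0ᶜ (by omega)
      have hcross : S0.card ≤ (S0 \ S1).card + S1.card :=
        Finset.card_le_card_sdiff_add_card
      omega

end CubeExp


/-- Edge expansion of the hypercube graph is at least 1: for every nonempty
`S ⊆ {0,1}^d` with `|S| ≤ 2^(d-1)`, the number of cube edges with exactly one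
endpoint in `S` (counted as ordered pairs `(u, v)` with `u ∈ S`, `v ∉ S`) is at
least `|S|`. -/
theorem cube_edge_expansion (d : ℕ) (S : Finset (Fin d → Fin 2))
    (hS : S.Nonempty) (hhalf : 2 * S.card ≤ 2 ^ d) :
    S.card ≤
      ((Finset.univ : Finset ((Fin d → Fin 2) × (Fin d → Fin 2))).filter
        fun e => e.1 ∈ S ∧ e.2 ∉ S ∧ CubeAdj e.1 e.2).card := by
  exact CubeExp.main d S hhalf
end

section
/- The vertex expansion of the d-dimensional hypercube graph is Ω(1/√d): there is a constant C > 0 such that for every nonempty S ⊆ {0,1}^d with |S| ≤ 2^{d-1}, the number of vertices outside S adjacent to some vertex of S is at least C·|S|/√d. -/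
open scoped Classical

open Finset

noncomputable section CubeVertexExpansionAux

/-- The number of hypercube neighbors of `x` that lie in `A`. -/
def cubeIn {d : ℕ} (A : Finset (Fin d → Fin 2)) (x : Fin d → Fin 2) : ℕ :=
  (Finset.univ.filter fun i : Fin d => Function.update x i (x i + 1) ∈ A).card

/-- One-sided Talagrand functional: `∑_{x ∉ A} √(#neighbors of x in A)`. -/
def cubePhi {d : ℕ} (A : Finset (Fin d → Fin 2)) : ℝ :=
  ∑ x : Fin d → Fin 2, if x ∈ A then 0 else Real.sqrt (cubeIn A x)

lemma cubePhi_nonneg {d : ℕ} (A : Finset (Fin d → Fin 2)) : 0 ≤ cubePhi A :=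
  Finset.sum_nonneg fun x _ => by
    by_cases h : x ∈ A <;> simp [h, Real.sqrt_nonneg]

lemma sqrt_aux {p q a c : ℝ} (hp : 0 ≤ p) (hq : 0 ≤ q) (ha : 0 ≤ a)
    (hc : c = 0 ∨ c = 1) :
    p * Real.sqrt a + q * c ≤ Real.sqrt (p ^ 2 + q ^ 2) * Real.sqrt (a + c) := by
  rcases hc with rfl | rfl
  · simp only [mul_zero, add_zero]
    refine mul_le_mul_of_nonneg_right ?_ (Real.sqrt_nonneg a)
    calc p = Real.sqrt (p ^ 2) := (Real.sqrt_sq hp).symm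
      _ ≤ Real.sqrt (p ^ 2 + q ^ 2) := Real.sqrt_le_sqrt (by nlinarith [sq_nonneg q])
  · rw [mul_one, ← Real.sqrt_mul (by positivity)]
    have h1 : 0 ≤ p * Real.sqrt a + q := by positivity
    rw [Real.le_sqrt h1 (by nlinarith [Real.sqrt_nonneg a, Real.sq_sqrt ha])]
    nlinarith [Real.sq_sqrt ha, sq_nonneg (p - q * Real.sqrt a), Real.sqrt_nonneg a]

lemma cubeIn_cons {d : ℕ} (A : Finset (Fin (d + 1) → Fin 2)) (b : Fin 2)
    (x : Fin d → Fin 2) :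
    cubeIn A (Fin.cons b x) =
      cubeIn (Finset.univ.filter fun z => Fin.cons b z ∈ A) x
        + (if Fin.cons (b + 1) x ∈ A then 1 else 0) := by
  rw [cubeIn, cubeIn, Finset.card_filter, Finset.card_filter, Fin.sum_univ_succ]
  simp only [Fin.cons_zero, Fin.update_cons_zero, Fin.cons_succ, ← Fin.cons_update,
    Finset.mem_filter, Finset.mem_univ, true_and]
  exact add_comm _ _

lemma sum_cube_succ {d : ℕ} (f : (Fin (d + 1) → Fin 2) → ℝ) :
    ∑ y : Fin (d + 1) → Fin 2, f y =
      (∑ x : Fin d → Fin 2, f (Fin.cons 0 x)) + ∑ x : Fin d → Fin 2, f (Fin.cons 1 x) := by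
  rw [← (Fin.consEquiv fun _ => Fin 2).sum_comp f, Fintype.sum_prod_type, Fin.sum_univ_two]
  rfl

lemma card_cube_split {d : ℕ} (A : Finset (Fin (d + 1) → Fin 2)) :
    (A.card : ℝ) =
      ((Finset.univ.filter fun z => Fin.cons 0 z ∈ A).card : ℝ)
        + ((Finset.univ.filter fun z => Fin.cons 1 z ∈ A).card : ℝ) := by
  have h := sum_cube_succ (fun y => if y ∈ A then (1 : ℝ) else 0)
  rw [Finset.sum_boole, Finset.sum_boole, Finset.sum_boole, Finset.filter_univ_mem] at h
  exact h

set_option maxHeartbeats 1000000 in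
lemma cube_talagrand (d : ℕ) (A : Finset (Fin d → Fin 2)) :
    (A.card : ℝ) * (2 ^ d - A.card) / 2 ^ d ≤ cubePhi A := by
  induction d with
  | zero =>
    have h1 : A.card ≤ 1 := by simpa using Finset.card_le_univ A
    have h0 : (A.card : ℝ) * (2 ^ 0 - A.card) / 2 ^ 0 = 0 := by
      rcases Nat.le_one_iff_eq_zero_or_eq_one.mp h1 with h | h <;> rw [h] <;> norm_num
    rw [h0]; exact cubePhi_nonneg A
  | succ d ih =>
    set A0 := Finset.univ.filter (fun z : Fin d → Fin 2 => Fin.cons 0 z ∈ A) with hA0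
    set A1 := Finset.univ.filter (fun z : Fin d → Fin 2 => Fin.cons 1 z ∈ A) with hA1
    set N : ℝ := 2 ^ d with hNdef
    have hN : 0 < N := by positivity
    set a : ℝ := (A0.card : ℝ) with hadef
    set b : ℝ := (A1.card : ℝ) with hbdef
    have ha0 : 0 ≤ a := Nat.cast_nonneg _
    have hb0 : 0 ≤ b := Nat.cast_nonneg _
    have haN : a ≤ N := by
      have h : A0.card ≤ 2 ^ d := by simpa using Finset.card_le_univ A0
      rw [hadef, hNdef]; exact_mod_cast h
    have hbN : b ≤ N := by
      have h : A1.card ≤ 2 ^ d := by simpa using Finset.card_le_univ A1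
      rw [hbdef, hNdef]; exact_mod_cast h
    set P : ℝ := a * (N - a) / N + b * (N - b) / N with hPdef
    set T : ℝ := |a - b| with hTdef
    have hP0 : 0 ≤ P := by
      apply add_nonneg <;> apply div_nonneg <;> nlinarith
    have hT0 : 0 ≤ T := abs_nonneg _
    clear_value N a b P T
    -- layer inequality
    have hlayer : ∀ c : Fin 2,
        P * cubePhi (Finset.univ.filter fun z => Fin.cons c z ∈ A)
          + T * (((Finset.univ.filter fun z => Fin.cons (c + 1) z ∈ A) \
                  (Finset.univ.filter fun z => Fin.cons c z ∈ A)).card : ℝ)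
        ≤ Real.sqrt (P ^ 2 + T ^ 2) *
            ∑ x : Fin d → Fin 2,
              (if Fin.cons c x ∈ A then 0 else Real.sqrt (cubeIn A (Fin.cons c x))) := by
      intro c
      set B0 := Finset.univ.filter (fun z : Fin d → Fin 2 => Fin.cons c z ∈ A) with hB0
      set B1 := Finset.univ.filter (fun z : Fin d → Fin 2 => Fin.cons (c + 1) z ∈ A) with hB1
      have hcard : ((B1 \ B0).card : ℝ)
          = ∑ x : Fin d → Fin 2, (if x ∈ B1 \ B0 then (1 : ℝ) else 0) := by
        rw [Finset.sum_boole, Finset.filter_univ_mem]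
      rw [cubePhi, Finset.mul_sum, hcard, Finset.mul_sum, Finset.mul_sum,
        ← Finset.sum_add_distrib]
      refine Finset.sum_le_sum fun x _ => ?_
      by_cases hx : x ∈ B0
      · have hxA : Fin.cons c x ∈ A := (Finset.mem_filter.mp hx).2
        have hxs : x ∉ B1 \ B0 := fun h => (Finset.mem_sdiff.mp h).2 hx
        simp [hx, hxA, hxs]
      · have hxA : Fin.cons c x ∉ A := fun h => hx (Finset.mem_filter.mpr ⟨Finset.mem_univ _, h⟩)
        rw [if_neg hx, if_neg hxA, cubeIn_cons, ← hB0]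
        by_cases hx1 : x ∈ B1
        · have h1A : Fin.cons (c + 1) x ∈ A := (Finset.mem_filter.mp hx1).2
          rw [if_pos (Finset.mem_sdiff.mpr ⟨hx1, hx⟩), if_pos h1A]
          push_cast
          exact sqrt_aux hP0 hT0 (Nat.cast_nonneg _) (Or.inr rfl)
        · have h1A : Fin.cons (c + 1) x ∉ A :=
            fun h => hx1 (Finset.mem_filter.mpr ⟨Finset.mem_univ _, h⟩)
          rw [if_neg (fun h => hx1 (Finset.mem_sdiff.mp h).1), if_neg h1A]
          push_cast
          simpa using sqrt_aux hP0 hT0 (Nat.cast_nonneg (cubeIn B0 x)) (Or.inl rfl)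
    have h0 := hlayer 0
    have h1 := hlayer 1
    rw [show (0 : Fin 2) + 1 = 1 by decide] at h0
    rw [show (1 : Fin 2) + 1 = 0 by decide] at h1
    rw [← hA0, ← hA1] at h0 h1
    have hsplit : cubePhi A =
        (∑ x : Fin d → Fin 2, if Fin.cons 0 x ∈ A then 0 else Real.sqrt (cubeIn A (Fin.cons 0 x)))
          + ∑ x : Fin d → Fin 2,
              if Fin.cons 1 x ∈ A then 0 else Real.sqrt (cubeIn A (Fin.cons 1 x)) := by
      rw [cubePhi, sum_cube_succ]
    have hkey : P * (cubePhi A0 + cubePhi A1)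
        + T * (((A1 \ A0).card : ℝ) + ((A0 \ A1).card : ℝ))
        ≤ Real.sqrt (P ^ 2 + T ^ 2) * cubePhi A := by
      rw [hsplit, mul_add]
      linarith [h0, h1]
    -- arithmetic facts
    have hIH0 := ih A0
    have hIH1 := ih A1
    rw [← hadef] at hIH0
    rw [← hbdef] at hIH1
    have hD : T ≤ ((A1 \ A0).card : ℝ) + ((A0 \ A1).card : ℝ) := by
      have h01 : (A0.card : ℝ) ≤ ((A0 \ A1).card : ℝ) + A1.card := by
        exact_mod_cast Finset.card_le_card_sdiff_add_card
      have h10 : (A1.card : ℝ) ≤ ((A1 \ A0).card : ℝ) + A0.card := by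
        exact_mod_cast Finset.card_le_card_sdiff_add_card
      rw [hTdef, abs_sub_le_iff]
      constructor
      · have : (0:ℝ) ≤ ((A1 \ A0).card : ℝ) := Nat.cast_nonneg _
        rw [hadef, hbdef]; linarith
      · have : (0:ℝ) ≤ ((A0 \ A1).card : ℝ) := Nat.cast_nonneg _
        rw [hadef, hbdef]; linarith
    have hmain : P ^ 2 + T ^ 2 ≤ Real.sqrt (P ^ 2 + T ^ 2) * cubePhi A := by
      have hPP : P * P ≤ P * (cubePhi A0 + cubePhi A1) := by
        apply mul_le_mul_of_nonneg_left _ hP0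
        rw [hPdef]; linarith
      have hTT : T * T ≤ T * (((A1 \ A0).card : ℝ) + ((A0 \ A1).card : ℝ)) :=
        mul_le_mul_of_nonneg_left hD hT0
      nlinarith [hkey]
    clear hlayer h0 h1 hsplit hIH0 hIH1 hD hkey ih
    set G : ℝ := (a + b) * (2 * N - (a + b)) / (2 * N) with hGdefn
    have hGeq : (A.card : ℝ) * (2 ^ (d + 1) - A.card) / 2 ^ (d + 1) = G := by
      have hc : (A.card : ℝ) = a + b := by
        rw [hadef, hbdef, hA0, hA1]; exact card_cube_split A
      have h2 : (2 : ℝ) ^ (d + 1) = 2 * N := by rw [hNdef]; ring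
      rw [hc, h2, hGdefn]
    clear_value G
    have hG0 : 0 ≤ G := by
      rw [hGdefn]
      exact div_nonneg (mul_nonneg (by linarith) (by linarith)) (by linarith)
    have hGP : 2 * N * G = 2 * N * P + (a - b) ^ 2 := by
      rw [hGdefn, hPdef]; field_simp; ring
    have hu0 : (0:ℝ) ≤ (a - b) ^ 2 := sq_nonneg _
    have hPN : N * P = a * (N - a) + b * (N - b) := by
      rw [hPdef]; field_simp
    have h4NP : 4 * (N * P) ≤ 2 * (N * N) := by
      nlinarith [sq_nonneg (N - 2 * a), sq_nonneg (N - 2 * b), hPN]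
    have huN : (a - b) ^ 2 ≤ N ^ 2 := by
      nlinarith [mul_nonneg (by linarith : (0:ℝ) ≤ N - a + b) (by linarith : (0:ℝ) ≤ N + a - b)]
    have hsq : (2 * N) ^ 2 * G ^ 2 ≤ (2 * N) ^ 2 * (P ^ 2 + (a - b) ^ 2) := by
      have expand : (2 * N) ^ 2 * G ^ 2 = (2 * N * P + (a - b) ^ 2) ^ 2 := by
        rw [← mul_pow, hGP]
      rw [expand]
      nlinarith [mul_le_mul_of_nonneg_right h4NP hu0, mul_le_mul_of_nonneg_right huN hu0]
    have hG2 : G ^ 2 ≤ P ^ 2 + T ^ 2 := by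
      have hpos : (0:ℝ) < (2 * N) ^ 2 := by positivity
      have h := (mul_le_mul_iff_right₀ hpos).mp hsq
      rw [hTdef, sq_abs]
      exact h
    have hle : G ≤ Real.sqrt (P ^ 2 + T ^ 2) :=
      (Real.le_sqrt hG0 (by positivity)).mpr hG2
    rw [hGeq]
    set s := Real.sqrt (P ^ 2 + T ^ 2) with hsdef
    have hs2 : s ^ 2 = P ^ 2 + T ^ 2 := Real.sq_sqrt (by positivity)
    rcases (Real.sqrt_nonneg (P ^ 2 + T ^ 2)).lt_or_eq with hspos | hszero
    · rw [← hsdef] at hspos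
      have hss : s * s ≤ s * cubePhi A := by nlinarith [hmain, hs2]
      exact hle.trans (le_of_mul_le_mul_left hss hspos)
    · rw [← hsdef] at hszero
      have : G ≤ 0 := hszero ▸ hle
      exact this.trans (cubePhi_nonneg A)

lemma cube_fin2_add_one_ne : ∀ t : Fin 2, t + 1 ≠ t := by decide

end CubeVertexExpansionAux

/-- The outside neighborhood of a set `S` of hypercube vertices. -/
noncomputable def cubeNbhd {d : ℕ} (S : Finset (Fin d → Fin 2)) : Finset (Fin d → Fin 2) :=
  Finset.univ.filter fun v => v ∉ S ∧ ∃ u ∈ S, CubeAdj u v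

/-- The vertex expansion of the hypercube graph is `Ω(1/√d)`: there is a constant
`C > 0` such that for every `d` and every nonempty `S ⊆ {0,1}^d` with `|S| ≤ 2^(d-1)`,
`|N(S)| ≥ C·|S|/√d`. -/
theorem cube_vertex_expansion :
    ∃ C : ℝ, 0 < C ∧ ∀ (d : ℕ) (S : Finset (Fin d → Fin 2)),
      S.Nonempty → 2 * S.card ≤ 2 ^ d →
      C * S.card / Real.sqrt d ≤ (cubeNbhd S).card := by
  refine ⟨1 / 2, by norm_num, ?_⟩
  intro d S hS hhalf
  have hd : 1 ≤ d := by
    by_contra h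
    push_neg at h
    interval_cases d
    have := Finset.card_pos.mpr hS
    omega
  have hdR : (0 : ℝ) < Real.sqrt d :=
    Real.sqrt_pos.mpr (by exact_mod_cast Nat.lt_of_lt_of_le Nat.zero_lt_one hd)
  -- upper bound on cubePhi
  have hub : cubePhi S ≤ ((cubeNbhd S).card : ℝ) * Real.sqrt d := by
    calc cubePhi S ≤ ∑ x : Fin d → Fin 2, (if x ∈ cubeNbhd S then Real.sqrt d else 0) := by
          refine Finset.sum_le_sum fun x _ => ?_
          by_cases hx : x ∈ S
          · rw [if_pos hx]
            split <;> simp [Real.sqrt_nonneg]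
          · rw [if_neg hx]
            by_cases h0 : cubeIn S x = 0
            · rw [h0]
              split <;> simp [Real.sqrt_nonneg]
            · have hpos : 0 < (Finset.univ.filter fun i : Fin d =>
                  Function.update x i (x i + 1) ∈ S).card := Nat.pos_of_ne_zero h0
              obtain ⟨i, hi⟩ := Finset.card_pos.mp hpos
              have hiS : Function.update x i (x i + 1) ∈ S := (Finset.mem_filter.mp hi).2
              set u := Function.update x i (x i + 1) with hu
              have hadj : CubeAdj u x := by
                have hset : (Finset.univ.filter fun j => u j ≠ x j) = {i} := by
                  ext j
                  simp only [Finset.mem_filter, Finset.mem_univ, true_and,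
                    Finset.mem_singleton]
                  constructor
                  · intro hj
                    by_contra hne
                    exact hj (by rw [hu, Function.update_of_ne hne])
                  · rintro rfl
                    rw [hu, Function.update_self]
                    exact cube_fin2_add_one_ne _
                rw [CubeAdj, hset, Finset.card_singleton]
              have hxN : x ∈ cubeNbhd S :=
                Finset.mem_filter.mpr ⟨Finset.mem_univ _, hx, u, hiS, hadj⟩
              rw [if_pos hxN]
              apply Real.sqrt_le_sqrt
              have : cubeIn S x ≤ d := by
                have := Finset.card_filter_le (Finset.univ : Finset (Fin d))
                  (fun i => Function.update x i (x i + 1) ∈ S)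
                simpa [cubeIn] using this
              exact_mod_cast this
      _ = ((cubeNbhd S).card : ℝ) * Real.sqrt d := by
          rw [Finset.sum_ite_mem, Finset.univ_inter, Finset.sum_const, nsmul_eq_mul]
  -- lower bound on cubePhi
  have hpow : (0 : ℝ) < 2 ^ d := by positivity
  have h2 : (S.card : ℝ) * 2 ≤ 2 ^ d := by
    have : ((2 * S.card : ℕ) : ℝ) ≤ ((2 ^ d : ℕ) : ℝ) := by exact_mod_cast hhalf
    push_cast at this
    linarith
  have hlow : (S.card : ℝ) / 2 ≤ cubePhi S := by
    refine le_trans ?_ (cube_talagrand d S)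
    rw [div_le_div_iff₀ (by norm_num : (0:ℝ) < 2) hpow]
    nlinarith [(by positivity : (0:ℝ) ≤ (S.card:ℝ)), h2]
  rw [div_le_iff₀ hdR]
  nlinarith [hub, hlow]
end

section
/- Projection lemma: Let P ⊂ ℝ^d be a 0/1 polytope and suppose there exist k coordinates such that the orthogonal projection π_k onto these coordinates satisfies: (1) every vertex of the k-cube {0,1}^k is the image of at least one vertex of P, and (2) for every vertex v of the k-cube, at most c vertices of P project to v. Then the edge expansion of the graph of P is at least 1/(2c). -/
open scoped BigOperators

def IsFaceOf {d : ℕ} (P F : Set (Fin d → ℝ)) : Prop :=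
  ∃ (c : Fin d → ℝ) (c₀ : ℝ), (∀ x ∈ P, ∑ i, c i * x i ≤ c₀) ∧
    F = {x ∈ P | ∑ i, c i * x i = c₀}

def IsVertexOf {d : ℕ} (P : Set (Fin d → ℝ)) (v : Fin d → ℝ) : Prop := IsFaceOf P {v}

def IsEdgeOf {d : ℕ} (P : Set (Fin d → ℝ)) (u v : Fin d → ℝ) : Prop :=
  u ≠ v ∧ IsFaceOf P (segment ℝ u v)

/-- The vertex set of `P`. -/
def polyVerts {d : ℕ} (P : Set (Fin d → ℝ)) : Set (Fin d → ℝ) := {v | IsVertexOf P v}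

/-- The number of edges of `P` with exactly one endpoint in `S`, counted as ordered
pairs `(u, v)` with `u ∈ S` and `v ∉ S`, so each crossing edge is counted once. -/
noncomputable def cutCard {d : ℕ} (P S : Set (Fin d → ℝ)) : ℕ :=
  {e : (Fin d → ℝ) × (Fin d → ℝ) | IsEdgeOf P e.1 e.2 ∧ e.1 ∈ S ∧ e.2 ∉ S}.ncard

/-- The edge expansion of the graph of `P` is at least `α`. -/
def ExpansionAtLeast {d : ℕ} (P : Set (Fin d → ℝ)) (α : ℝ) : Prop :=
  ∀ S : Set (Fin d → ℝ), S ⊆ polyVerts P → S.Nonempty →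
    2 * S.ncard ≤ (polyVerts P).ncard → α * S.ncard ≤ cutCard P S


open Finset
open Finset


open Finset

variable {d : ℕ}

/-- The standard linear functional. -/
def dot (c x : Fin d → ℝ) : ℝ := ∑ i, c i * x i

lemma dot_isLinear (c : Fin d → ℝ) : IsLinearMap ℝ (dot c) := by
  constructor
  · intro x y; simp [dot, mul_add, Finset.sum_add_distrib]
  · intro a x; simp [dot, Finset.mul_sum]; ring_nf; simp [mul_assoc, mul_comm, mul_left_comm]

def zo (x : Fin d → ℝ) : Prop := ∀ i, x i = 0 ∨ x i = 1

/-- Separating functional for a 0/1 point. -/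
def chi (u : Fin d → ℝ) : Fin d → ℝ := fun i => 2 * u i - 1

lemma chi_le {u y : Fin d → ℝ} (hu : zo u) (hy : zo y) : dot (chi u) y ≤ dot (chi u) u := by
  unfold dot
  apply Finset.sum_le_sum
  intro i _
  rcases hu i with h | h <;> rcases hy i with h' | h' <;> simp [chi, h, h'] <;> norm_num

lemma chi_eq {u y : Fin d → ℝ} (hu : zo u) (hy : zo y)
    (h : dot (chi u) y = dot (chi u) u) : y = u := by
  have h0 : ∀ i ∈ Finset.univ, chi u i * y i ≤ chi u i * u i := by
    intro i _
    rcases hu i with h | h <;> rcases hy i with h' | h' <;> simp [chi, h, h'] <;> norm_num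
  funext i
  by_contra hne
  have hlt : chi u i * y i < chi u i * u i := by
    rcases hu i with h | h <;> rcases hy i with h' | h' <;>
      simp [chi, h, h'] at hne ⊢ <;> norm_num
  have hst : dot (chi u) y < dot (chi u) u := by
    unfold dot
    exact Finset.sum_lt_sum h0 ⟨i, Finset.mem_univ i, hlt⟩
  linarith [h ▸ hst]

lemma chi_lt {u y : Fin d → ℝ} (hu : zo u) (hy : zo y) (hne : y ≠ u) :
    dot (chi u) y < dot (chi u) u :=
  lt_of_le_of_ne (chi_le hu hy) (fun h => hne (chi_eq hu hy h))

/-- A 0/1 point on a segment between 0/1 points is an endpoint. -/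
lemma seg_zo {u v g : Fin d → ℝ} (hu : zo u) (hv : zo v) (hg : zo g)
    (h : g ∈ segment ℝ u v) : g = u ∨ g = v := by
  obtain ⟨a, b, ha, hb, hab, hc⟩ := h
  by_cases huv : u = v
  · left; subst huv
    have : a • u + b • u = u := by rw [← add_smul, hab, one_smul]
    rw [← hc, this]
  · have : ∃ i, u i ≠ v i := by
      by_contra hno; push_neg at hno; exact huv (funext hno)
    obtain ⟨i, hi⟩ := this
    have hgi : a * u i + b * v i = g i := congrFun hc i
    have key : b = 0 ∨ a = 0 := by
      rcases hu i with h1 | h1 <;> rcases hv i with h2 | h2 <;>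
        rcases hg i with h3 | h3 <;> rw [h1, h2] at hgi hi <;> simp_all <;> linarith
    rcases key with hb0 | ha0
    · left
      have haa : a = 1 := by linarith
      rw [← hc, hb0, haa]; simp
    · right
      have hbb : b = 1 := by linarith
      rw [← hc, ha0, hbb]; simp

noncomputable def dotL (c : Fin d → ℝ) : (Fin d → ℝ) →ₗ[ℝ] ℝ :=
  IsLinearMap.mk' (dot c) (dot_isLinear c)

noncomputable section
open Classical

/-- argmax of the functional `dot c` over `F`. -/
def argmaxF (F : Finset (Fin d → ℝ)) (c : Fin d → ℝ) : Finset (Fin d → ℝ) :=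
  F.filter (fun y => ∀ z ∈ F, dot c z ≤ dot c y)

lemma argmaxF_subset (F : Finset (Fin d → ℝ)) (c : Fin d → ℝ) : argmaxF F c ⊆ F :=
  Finset.filter_subset _ _

lemma argmaxF_nonempty {F : Finset (Fin d → ℝ)} (hne : F.Nonempty) (c : Fin d → ℝ) :
    (argmaxF F c).Nonempty := by
  obtain ⟨y, hy, hmax⟩ := F.exists_max_image (dot c) hne
  exact ⟨y, Finset.mem_filter.2 ⟨hy, hmax⟩⟩

lemma dot_le_of_mem_conv {F : Finset (Fin d → ℝ)} {c : Fin d → ℝ} {x : Fin d → ℝ}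
    (hx : x ∈ convexHull ℝ (F : Set (Fin d → ℝ))) {y : Fin d → ℝ} (hy : y ∈ argmaxF F c) :
    dot c x ≤ dot c y := by
  obtain ⟨hyF, hmax⟩ := Finset.mem_filter.1 hy
  have : convexHull ℝ (F : Set (Fin d → ℝ)) ⊆ {w | dot c w ≤ dot c y} := by
    apply convexHull_min _ (convex_halfSpace_le (dot_isLinear c) _)
    intro z hz
    exact hmax z hz
  exact this hx

/-- The face of the hull given by maximizing `dot c` is the hull of the argmax set. -/
lemma face_eq {F : Finset (Fin d → ℝ)} {c : Fin d → ℝ} {y₀ : Fin d → ℝ}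
    (hy₀ : y₀ ∈ argmaxF F c) :
    {x ∈ convexHull ℝ (F : Set (Fin d → ℝ)) | dot c x = dot c y₀} =
      convexHull ℝ ((argmaxF F c : Finset (Fin d → ℝ)) : Set (Fin d → ℝ)) := by
  obtain ⟨hy₀F, hmax⟩ := Finset.mem_filter.1 hy₀
  apply Set.Subset.antisymm
  · rintro x ⟨hxP, hxM⟩
    rw [Finset.convexHull_eq] at hxP
    obtain ⟨w, hw0, hw1, hwx⟩ := hxP
    have hxsum : x = ∑ y ∈ F, w y • y := by
      rw [← hwx, Finset.centerMass_eq_of_sum_1 _ _ hw1]; rfl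
    have hdotsum : dot c x = ∑ y ∈ F, w y * dot c y := by
      rw [hxsum]
      rw [show dot c (∑ y ∈ F, w y • y) = dotL c (∑ y ∈ F, w y • y) from rfl]
      rw [map_sum]
      simp [dotL, smul_eq_mul]
    have hzero : ∑ y ∈ F, w y * (dot c y₀ - dot c y) = 0 := by
      have e1 : ∑ y ∈ F, w y * (dot c y₀ - dot c y)
          = (∑ y ∈ F, w y) * dot c y₀ - ∑ y ∈ F, w y * dot c y := by
        rw [Finset.sum_mul, ← Finset.sum_sub_distrib]
        congr 1; funext y; ring
      rw [e1, hw1, one_mul, ← hdotsum, hxM, sub_self]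
    have hterm : ∀ y ∈ F, w y * (dot c y₀ - dot c y) = 0 := by
      refine (Finset.sum_eq_zero_iff_of_nonneg ?_).1 hzero
      intro y hyF
      have h1 := hmax y hyF
      have h2 := hw0 y hyF
      nlinarith
    have hw0' : ∀ y ∈ F, y ∉ argmaxF F c → w y = 0 := by
      intro y hyF hyA
      rcases mul_eq_zero.1 (hterm y hyF) with h | h
      · exact h
      · exfalso
        apply hyA
        refine Finset.mem_filter.2 ⟨hyF, fun z hz => ?_⟩
        have h1 : dot c y = dot c y₀ := by linarith [sub_eq_zero.1 h]
        rw [h1]; exact hmax z hz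
    have hsum' : ∑ y ∈ argmaxF F c, w y = 1 := by
      rw [← hw1]
      exact (Finset.sum_subset (argmaxF_subset F c) (fun y hy hny => hw0' y hy hny)).symm ▸ rfl
    have hx' : x = ∑ y ∈ argmaxF F c, w y • y := by
      rw [hxsum]
      exact (Finset.sum_subset (argmaxF_subset F c) (fun y hy hny => by
        rw [hw0' y hy hny, zero_smul])).symm
    have : x = (argmaxF F c).centerMass w id := by
      rw [Finset.centerMass_eq_of_sum_1 _ _ hsum']
      simpa using hx'
    rw [this]
    exact Finset.centerMass_mem_convexHull _ (fun y hy => hw0 y (argmaxF_subset F c hy))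
      (by rw [hsum']; norm_num) (fun y hy => Finset.mem_coe.2 hy)
  · intro x hx
    constructor
    · exact convexHull_mono (by exact_mod_cast argmaxF_subset F c) hx
    · have hsub : ((argmaxF F c : Finset (Fin d → ℝ)) : Set (Fin d → ℝ)) ⊆
          {w | dot c w = dot c y₀} := by
        intro z hz
        obtain ⟨hzF, hzmax⟩ := Finset.mem_filter.1 (Finset.mem_coe.1 hz)
        exact le_antisymm (hmax z hzF) (hzmax y₀ hy₀F)
      exact convexHull_min hsub (convex_hyperplane (dot_isLinear c) _) hx

section Poly

variable {F : Finset (Fin d → ℝ)}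

lemma sum_eq_dot (c x : Fin d → ℝ) : ∑ i, c i * x i = dot c x := rfl

/-- The convex hull of the argmax set is a face. -/
lemma isFaceOf_argmax (hne : F.Nonempty) (c : Fin d → ℝ) :
    IsFaceOf (convexHull ℝ (F : Set (Fin d → ℝ)))
      (convexHull ℝ ((argmaxF F c : Finset (Fin d → ℝ)) : Set (Fin d → ℝ))) := by
  obtain ⟨y₀, hy₀⟩ := argmaxF_nonempty hne c
  exact ⟨c, dot c y₀, fun x hx => dot_le_of_mem_conv hx hy₀, (face_eq hy₀).symm⟩

/-- Characterization of a face presentation: the value must be the max value and the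
face is the hull of the argmax set. -/
lemma face_char (hne : F.Nonempty) {c : Fin d → ℝ} {c₀ : ℝ}
    (hub : ∀ x ∈ convexHull ℝ (F : Set (Fin d → ℝ)), dot c x ≤ c₀)
    {x₀ : Fin d → ℝ} (hx₀ : x₀ ∈ convexHull ℝ (F : Set (Fin d → ℝ))) (hx₀v : dot c x₀ = c₀) :
    {x ∈ convexHull ℝ (F : Set (Fin d → ℝ)) | dot c x = c₀} =
      convexHull ℝ ((argmaxF F c : Finset (Fin d → ℝ)) : Set (Fin d → ℝ)) := by
  obtain ⟨y₀, hy₀⟩ := argmaxF_nonempty hne c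
  have h1 : dot c y₀ ≤ c₀ := by
    apply hub
    exact subset_convexHull ℝ (F : Set (Fin d → ℝ)) (Finset.mem_coe.2 (argmaxF_subset F c hy₀))
  have h2 : c₀ ≤ dot c y₀ := by
    rw [← hx₀v]; exact dot_le_of_mem_conv hx₀ hy₀
  have : c₀ = dot c y₀ := le_antisymm h2 h1
  rw [this]
  exact face_eq hy₀

variable (hF : ∀ x ∈ F, zo x)

/-- For a 0/1 point `v`, the argmax of `chi v` over `F` is `{v}`. -/
lemma argmax_chi (hF : ∀ x ∈ F, zo x) {v : Fin d → ℝ} (hv : v ∈ F) :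
    argmaxF F (chi v) = {v} := by
  apply Finset.eq_singleton_iff_unique_mem.2
  constructor
  · exact Finset.mem_filter.2 ⟨hv, fun z hz => chi_le (hF v hv) (hF z hz)⟩
  · intro y hy
    obtain ⟨hyF, hymax⟩ := Finset.mem_filter.1 hy
    have h1 : dot (chi v) v ≤ dot (chi v) y := hymax v hv
    have h2 : dot (chi v) y ≤ dot (chi v) v := chi_le (hF v hv) (hF y hyF)
    exact chi_eq (hF v hv) (hF y hyF) (le_antisymm h2 h1)

lemma mem_isVertexOf (hF : ∀ x ∈ F, zo x) {v : Fin d → ℝ} (hv : v ∈ F) :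
    IsVertexOf (convexHull ℝ (F : Set (Fin d → ℝ))) v := by
  have h := isFaceOf_argmax (F := F) ⟨v, hv⟩ (chi v)
  rwa [argmax_chi hF hv, Finset.coe_singleton, convexHull_singleton] at h

lemma isVertexOf_mem (hF : ∀ x ∈ F, zo x) (hne : F.Nonempty) {v : Fin d → ℝ}
    (hv : IsVertexOf (convexHull ℝ (F : Set (Fin d → ℝ))) v) : v ∈ F := by
  obtain ⟨c, c₀, hub, heq⟩ := hv
  have hvmem : v ∈ {x ∈ convexHull ℝ (F : Set (Fin d → ℝ)) | ∑ i, c i * x i = c₀} := by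
    rw [← heq]; exact rfl
  obtain ⟨hvP, hvval⟩ := hvmem
  have hface := face_char hne (c := c) (c₀ := c₀) (fun x hx => hub x hx) hvP hvval
  have : ({v} : Set (Fin d → ℝ)) = convexHull ℝ ((argmaxF F c : Finset (Fin d → ℝ)) :
      Set (Fin d → ℝ)) := by
    rw [heq]; exact hface
  obtain ⟨y₀, hy₀⟩ := argmaxF_nonempty hne c
  have : y₀ ∈ ({v} : Set (Fin d → ℝ)) := by
    rw [this]
    exact subset_convexHull ℝ _ (Finset.mem_coe.2 hy₀)
  rw [Set.mem_singleton_iff] at this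
  rw [← this]
  exact argmaxF_subset F c hy₀

lemma polyVerts_eq (hF : ∀ x ∈ F, zo x) (hne : F.Nonempty) :
    polyVerts (convexHull ℝ (F : Set (Fin d → ℝ))) = (F : Set (Fin d → ℝ)) := by
  ext v
  exact ⟨fun h => isVertexOf_mem hF hne h, fun h => mem_isVertexOf hF h⟩

/-- If the argmax set is a pair, it is an edge. -/
lemma argmax_pair_edge (hne : F.Nonempty) {q u z : Fin d → ℝ}
    (h : argmaxF F q = {u, z}) (huz : u ≠ z) :
    IsEdgeOf (convexHull ℝ (F : Set (Fin d → ℝ))) u z := by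
  refine ⟨huz, ?_⟩
  have hface := isFaceOf_argmax (F := F) hne q
  rw [h] at hface
  have : ((({u, z} : Finset (Fin d → ℝ)) : Set (Fin d → ℝ))) = {u, z} := by
    simp
  rw [this, convexHull_pair] at hface
  exact hface

/-- Endpoint of a segment equal to the hull of a finset belongs to the finset. -/
lemma endpoint_mem_of_hull_eq_segment {G : Finset (Fin d → ℝ)} {u v : Fin d → ℝ}
    (huv : u ≠ v) (h : convexHull ℝ (G : Set (Fin d → ℝ)) = segment ℝ u v) : u ∈ G := by
  classical
  have huc : u ∈ convexHull ℝ (G : Set (Fin d → ℝ)) := by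
    rw [h]; exact left_mem_segment ℝ u v
  rw [Finset.convexHull_eq] at huc
  obtain ⟨lam, hlam0, hlam1, hlamx⟩ := huc
  have hrep : ∀ g : Fin d → ℝ, ∃ tg : ℝ, g ∈ G → (0 ≤ tg ∧ tg ≤ 1 ∧ g = tg • u + (1 - tg) • v) := by
    intro g
    by_cases hg : g ∈ G
    · have : g ∈ segment ℝ u v := by
        rw [← h]; exact subset_convexHull ℝ _ (Finset.mem_coe.2 hg)
      obtain ⟨a, b, ha, hb, hab, hval⟩ := this
      exact ⟨a, fun _ => ⟨ha, by linarith, by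
        rw [← hval]; congr 1; rw [show (1:ℝ) - a = b by linarith]⟩⟩
    · exact ⟨0, fun h' => absurd h' hg⟩
  choose t ht using hrep
  have husum : u = ∑ g ∈ G, lam g • g := by
    rw [← hlamx, Finset.centerMass_eq_of_sum_1 _ _ hlam1]
    rfl
  have hexp0 : ∑ g ∈ G, lam g • g
      = (∑ g ∈ G, lam g * t g) • u + (∑ g ∈ G, lam g * (1 - t g)) • v := by
    rw [Finset.sum_smul, Finset.sum_smul, ← Finset.sum_add_distrib]
    apply Finset.sum_congr rfl
    intro g hg
    have h3 := (ht g hg).2.2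
    calc lam g • g = lam g • (t g • u + (1 - t g) • v) := congrArg (fun x => lam g • x) h3
      _ = (lam g * t g) • u + (lam g * (1 - t g)) • v := by
          rw [smul_add, smul_smul, smul_smul]
  have hexp : u = (∑ g ∈ G, lam g * t g) • u + (∑ g ∈ G, lam g * (1 - t g)) • v :=
    husum.trans hexp0
  set α := ∑ g ∈ G, lam g * t g with hα
  have hβ : ∑ g ∈ G, lam g * (1 - t g) = 1 - α := by
    have e3 : ∑ g ∈ G, lam g * (1 - t g)
        = ∑ g ∈ G, lam g - ∑ g ∈ G, lam g * t g := by
      rw [← Finset.sum_sub_distrib]; congr 1; funext g; ring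
    rw [e3, hlam1]
  rw [hβ] at hexp
  have hsmul : (1 - α) • (u - v) = 0 := by
    have e2 : (1 - α) • (u - v) = u - (α • u + (1 - α) • v) := by
      rw [smul_sub, sub_smul, sub_smul, one_smul, one_smul]; abel
    rw [e2, ← hexp, sub_self]
  have hα1 : α = 1 := by
    by_contra hne
    rcases smul_eq_zero.1 hsmul with h' | h'
    · exact hne (by linarith [sub_eq_zero.1 (by linarith [h'] : (1:ℝ) - α = 0)])
    · exact huv (sub_eq_zero.1 h')
  have hzero : ∑ g ∈ G, lam g * (1 - t g) = 0 := by rw [hβ, hα1, sub_self]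
  have hterms : ∀ g ∈ G, lam g * (1 - t g) = 0 := by
    refine (Finset.sum_eq_zero_iff_of_nonneg ?_).1 hzero
    intro g hg
    have h1 := hlam0 g hg
    have h2 := (ht g hg).2.1
    nlinarith
  have hex : ∃ g ∈ G, 0 < lam g := by
    by_contra hno
    push_neg at hno
    have : ∑ g ∈ G, lam g = 0 :=
      Finset.sum_eq_zero (fun g hg => le_antisymm (hno g hg) (hlam0 g hg))
    rw [this] at hlam1
    norm_num at hlam1
  obtain ⟨g, hg, hgpos⟩ := hex
  have ht1g : t g = 1 := by
    have := hterms g hg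
    rcases mul_eq_zero.1 this with h' | h'
    · exact absurd h' (ne_of_gt hgpos)
    · linarith [sub_eq_zero.1 h']
  have : g = u := by
    rw [(ht g hg).2.2, ht1g]; simp
  rw [← this]; exact hg

/-- Endpoints of edges are in `F`. -/
lemma edge_endpoints (hne : F.Nonempty) {u v : Fin d → ℝ}
    (h : IsEdgeOf (convexHull ℝ (F : Set (Fin d → ℝ))) u v) : u ∈ F ∧ v ∈ F := by
  obtain ⟨huv, c, c₀, hub, heq⟩ := h
  have huP : u ∈ segment ℝ u v := left_mem_segment ℝ u v
  rw [heq] at huP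
  obtain ⟨huPc, huval⟩ := huP
  have hface := face_char hne (c := c) (c₀ := c₀) (fun x hx => hub x hx) huPc huval
  have hseg : convexHull ℝ ((argmaxF F c : Finset (Fin d → ℝ)) : Set (Fin d → ℝ))
      = segment ℝ u v := by
    have h2 : segment ℝ u v = convexHull ℝ ((argmaxF F c : Finset (Fin d → ℝ)) :
        Set (Fin d → ℝ)) := by rw [heq]; exact hface
    exact h2.symm
  constructor
  · exact argmaxF_subset F c (endpoint_mem_of_hull_eq_segment huv hseg)
  · have hseg' : convexHull ℝ ((argmaxF F c : Finset (Fin d → ℝ)) : Set (Fin d → ℝ))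
        = segment ℝ v u := by rw [hseg, segment_symm]
    exact argmaxF_subset F c (endpoint_mem_of_hull_eq_segment (Ne.symm huv) hseg')

end Poly

section Shoot

variable {F : Finset (Fin d → ℝ)}

lemma dot_combo (A t : ℝ) (q r x : Fin d → ℝ) :
    dot (fun i => A * q i + t * r i) x = A * dot q x + t * dot r x := by
  simp only [dot, Finset.mul_sum, ← Finset.sum_add_distrib]
  congr 1; funext i; ring

/-- Restriction of the argmax defining a subface. -/
lemma argmax_shift (hne : F.Nonempty) (q r : Fin d → ℝ) :
    ∃ q', argmaxF F q' =
      (argmaxF F q).filter (fun y => ∀ z ∈ argmaxF F q, dot r z ≤ dot r y) := by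
  classical
  set G := argmaxF F q with hG
  have hGne : G.Nonempty := argmaxF_nonempty hne q
  have hGF : G ⊆ F := argmaxF_subset F q
  obtain ⟨h₀, hh₀G, hh₀max⟩ := G.exists_max_image (dot r) hGne
  have hh₀H : h₀ ∈ G.filter (fun y => ∀ z ∈ G, dot r z ≤ dot r y) :=
    Finset.mem_filter.2 ⟨hh₀G, hh₀max⟩
  by_cases hFG : ∀ y ∈ F, y ∈ G
  · refine ⟨r, ?_⟩
    have hGF' : G = F := Finset.Subset.antisymm hGF (fun y hy => hFG y hy)
    unfold argmaxF
    rw [hGF']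
  · push_neg at hFG
    obtain ⟨y₀, hy₀F, hy₀G⟩ := hFG
    have hsd : (F \ G).Nonempty := ⟨y₀, Finset.mem_sdiff.2 ⟨hy₀F, hy₀G⟩⟩
    obtain ⟨y₂, hy₂, hy₂max⟩ := (F \ G).exists_max_image (dot q) hsd
    obtain ⟨hy₂F, hy₂G⟩ := Finset.mem_sdiff.1 hy₂
    set γ := dot q h₀ - dot q y₂ with hγ
    have hqmax : ∀ z ∈ F, dot q z ≤ dot q h₀ := (Finset.mem_filter.1 hh₀G).2
    have hγpos : 0 < γ := by
      have h1 : dot q y₂ ≤ dot q h₀ := hqmax y₂ hy₂F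
      rcases lt_or_eq_of_le h1 with h | h
      · simpa [hγ] using sub_pos.2 h
      · exfalso
        apply hy₂G
        refine Finset.mem_filter.2 ⟨hy₂F, fun z hz => ?_⟩
        rw [← h] at hqmax
        exact hqmax z hz
    obtain ⟨rmax, hrmaxF, hrmax⟩ := F.exists_max_image (dot r) hne
    obtain ⟨rmin, hrminF, hrmin⟩ := F.exists_min_image (dot r) hne
    set A := (dot r rmax - dot r rmin + 1) / γ with hA
    have hApos : 0 < A := by
      apply div_pos _ hγpos
      have : dot r rmin ≤ dot r rmax := hrmax rmin hrminF
      linarith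
    refine ⟨fun i => A * q i + 1 * r i, ?_⟩
    have hdot : ∀ x, dot (fun i => A * q i + 1 * r i) x = A * dot q x + dot r x := by
      intro x; rw [dot_combo]; ring
    have hqG : ∀ y ∈ G, dot q y = dot q h₀ := by
      intro y hy
      exact le_antisymm (hqmax y (hGF hy)) ((Finset.mem_filter.1 hy).2 h₀ (hGF hh₀G))
    have hkey : ∀ y ∈ F, dot (fun i => A * q i + 1 * r i) y
        ≤ A * dot q h₀ + dot r h₀ := by
      intro y hyF
      rw [hdot]
      by_cases hyG : y ∈ G
      · have := hh₀max y hyG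
        rw [hqG y hyG]
        linarith
      · have h1 : dot q y ≤ dot q h₀ - γ := by
          have := hy₂max y (Finset.mem_sdiff.2 ⟨hyF, hyG⟩)
          simp only [hγ]
          linarith
        have h2 : A * dot q y ≤ A * (dot q h₀ - γ) :=
          mul_le_mul_of_nonneg_left h1 (le_of_lt hApos)
        have h3 : A * γ = dot r rmax - dot r rmin + 1 := by
          rw [hA, div_mul_cancel₀]
          exact ne_of_gt hγpos
        have h4 : dot r y ≤ dot r rmax := hrmax y hyF
        have h5 : dot r rmin ≤ dot r h₀ := hrmin h₀ (hGF hh₀G)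
        nlinarith
    have hstrict : ∀ y ∈ F, y ∉ G → dot (fun i => A * q i + 1 * r i) y
        < A * dot q h₀ + dot r h₀ := by
      intro y hyF hyG
      rw [hdot]
      have h1 : dot q y ≤ dot q h₀ - γ := by
        have := hy₂max y (Finset.mem_sdiff.2 ⟨hyF, hyG⟩)
        simp only [hγ]
        linarith
      have h2 : A * dot q y ≤ A * (dot q h₀ - γ) :=
        mul_le_mul_of_nonneg_left h1 (le_of_lt hApos)
      have h3 : A * γ = dot r rmax - dot r rmin + 1 := by
        rw [hA, div_mul_cancel₀]
        exact ne_of_gt hγpos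
      have h4 : dot r y ≤ dot r rmax := hrmax y hyF
      have h5 : dot r rmin ≤ dot r h₀ := hrmin h₀ (hGF hh₀G)
      nlinarith
    ext y
    constructor
    · intro hy
      obtain ⟨hyF, hymax⟩ := Finset.mem_filter.1 hy
      have h1 : dot (fun i => A * q i + 1 * r i) h₀ ≤ dot (fun i => A * q i + 1 * r i) y :=
        hymax h₀ (hGF hh₀G)
      simp only [hdot] at h1
      have h2 := hkey y hyF
      simp only [hdot] at h2
      have heq : A * dot q y + dot r y = A * dot q h₀ + dot r h₀ := by linarith
      have hyG : y ∈ G := by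
        by_contra hyG
        have h3 := hstrict y hyF hyG
        simp only [hdot] at h3
        linarith
      refine Finset.mem_filter.2 ⟨hyG, fun z hz => ?_⟩
      have h3 : dot q y = dot q h₀ := hqG y hyG
      have h4 : dot r y = dot r h₀ := by
        rw [h3] at heq; linarith
      rw [h4]
      exact hh₀max z hz
    · intro hyH
      obtain ⟨hyG, hymax⟩ := Finset.mem_filter.1 hyH
      refine Finset.mem_filter.2 ⟨hGF hyG, fun z hzF => ?_⟩
      have h1 := hkey z hzF
      simp only [hdot] at h1 ⊢
      have h2 : dot r h₀ ≤ dot r y := hymax h₀ hh₀G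
      have h3 : dot q y = dot q h₀ := hqG y hyG
      rw [h3]
      linarith

/-- Shooting from an exposed vertex: a sub-face containing `u` in which every other
vertex strictly improves `l`. -/
lemma shoot (hF : ∀ x ∈ F, zo x) (hne : F.Nonempty) {q : Fin d → ℝ}
    {G : Finset (Fin d → ℝ)} (hG : argmaxF F q = G) {u : Fin d → ℝ} (hu : u ∈ G)
    {l : Fin d → ℝ} (hD : ∃ z ∈ G, dot l u < dot l z) :
    ∃ (q' : Fin d → ℝ) (G' : Finset (Fin d → ℝ)), argmaxF F q' = G' ∧ G' ⊆ G ∧ u ∈ G' ∧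
      (∃ z ∈ G', dot l u < dot l z) ∧ (∀ y ∈ G', y ≠ u → dot l u < dot l y) := by
  classical
  have hGF : G ⊆ F := hG ▸ argmaxF_subset F q
  have huF : u ∈ F := hGF hu
  set cu := chi u with hcu
  set D := G.filter (fun z => dot l u < dot l z) with hDdef
  have hDne : D.Nonempty := by
    obtain ⟨z, hz, hz'⟩ := hD
    exact ⟨z, Finset.mem_filter.2 ⟨hz, hz'⟩⟩
  obtain ⟨zs, hzsD, hzsmin⟩ := D.exists_min_image
    (fun z => (dot cu u - dot cu z) / (dot l z - dot l u)) hDne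
  obtain ⟨hzsG, hzsl⟩ := Finset.mem_filter.1 hzsD
  set t := (dot cu u - dot cu zs) / (dot l zs - dot l u) with ht
  have hnum : ∀ z ∈ D, 0 < dot cu u - dot cu z := by
    intro z hz
    obtain ⟨hzG, hzl⟩ := Finset.mem_filter.1 hz
    have hzu : z ≠ u := by rintro rfl; exact lt_irrefl _ hzl
    have := chi_lt (hF u huF) (hF z (hGF hzG)) hzu
    rw [hcu]; linarith
  have hden : ∀ z ∈ D, 0 < dot l z - dot l u := by
    intro z hz
    have := (Finset.mem_filter.1 hz).2
    linarith
  have htpos : 0 < t := div_pos (hnum zs hzsD) (hden zs hzsD)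
  set r := fun i => 1 * cu i + t * l i with hr
  have hdotr : ∀ x, dot r x = dot cu x + t * dot l x := by
    intro x; rw [hr, dot_combo]; ring
  have hmaxu : ∀ y ∈ G, dot r y ≤ dot r u := by
    intro y hyG
    rw [hdotr, hdotr]
    by_cases hyu : y = u
    · rw [hyu]
    by_cases hyD : y ∈ D
    · have h1 : t ≤ (dot cu u - dot cu y) / (dot l y - dot l u) := hzsmin y hyD
      have h2 := hden y hyD
      have h3 : t * (dot l y - dot l u) ≤ dot cu u - dot cu y :=
        (le_div_iff₀ h2).1 h1
      nlinarith
    · have h1 : dot l y ≤ dot l u := by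
        by_contra hc
        push_neg at hc
        exact hyD (Finset.mem_filter.2 ⟨hyG, hc⟩)
      have h2 : dot cu y < dot cu u := chi_lt (hF u huF) (hF y (hGF hyG)) hyu
      nlinarith
  have hzs_eq : dot r zs = dot r u := by
    rw [hdotr, hdotr]
    have h2 := hden zs hzsD
    have : t * (dot l zs - dot l u) = dot cu u - dot cu zs := by
      rw [ht, div_mul_cancel₀]
      exact ne_of_gt h2
    linarith
  obtain ⟨q', hq'⟩ := argmax_shift hne q r
  rw [hG] at hq'
  set G' := G.filter (fun y => ∀ z ∈ G, dot r z ≤ dot r y) with hG'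
  have huG' : u ∈ G' := Finset.mem_filter.2 ⟨hu, hmaxu⟩
  have hzsG' : zs ∈ G' := by
    refine Finset.mem_filter.2 ⟨hzsG, fun z hz => ?_⟩
    rw [hzs_eq]
    exact hmaxu z hz
  refine ⟨q', G', hq', Finset.filter_subset _ _, huG', ⟨zs, hzsG', hzsl⟩, ?_⟩
  intro y hyG' hyu
  obtain ⟨hyG, hymax⟩ := Finset.mem_filter.1 hyG'
  by_contra hc
  push_neg at hc
  have h2 : dot cu y < dot cu u := chi_lt (hF u huF) (hF y (hGF hyG)) hyu
  have h3 : dot r y < dot r u := by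
    rw [hdotr, hdotr]
    nlinarith
  have h4 : dot r u ≤ dot r y := hymax u hu
  linarith

end Shoot

section Improve

variable {F : Finset (Fin d → ℝ)}

lemma dot_coord (i : Fin d) (a : ℝ) (x : Fin d → ℝ) :
    dot (fun j => if j = i then a else 0) x = a * x i := by
  unfold dot
  rw [Finset.sum_eq_single i]
  · simp
  · intro b _ hb; simp [hb]
  · intro h; exact absurd (Finset.mem_univ i) h

/-- Every vertex of a face with at least 2 vertices has a neighbour in the face. -/
lemma face_edge (hF : ∀ x ∈ F, zo x) (hne : F.Nonempty) :
    ∀ (n : ℕ) (G : Finset (Fin d → ℝ)) (q : Fin d → ℝ), argmaxF F q = G → G.card ≤ n →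
    ∀ u ∈ G, 2 ≤ G.card →
    ∃ z ∈ G, z ≠ u ∧ IsEdgeOf (convexHull ℝ (F : Set (Fin d → ℝ))) u z := by
  intro n
  induction n with
  | zero => intro G q hG hcard u hu h2; omega
  | succ n ih =>
    intro G q hG hcard u hu h2
    by_cases hc2 : G.card = 2
    · obtain ⟨a, b, hab, hGab⟩ := Finset.card_eq_two.1 hc2
      rcases (by rw [hGab] at hu; simpa using hu : u = a ∨ u = b) with rfl | rfl
      · refine ⟨b, by rw [hGab]; simp, Ne.symm hab, ?_⟩
        exact argmax_pair_edge hne (by rw [hG, hGab]) hab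
      · refine ⟨a, by rw [hGab]; simp, hab, ?_⟩
        exact argmax_pair_edge hne (by rw [hG, hGab, Finset.pair_comm]) (Ne.symm hab)
    · have h3 : 3 ≤ G.card := by omega
      have herase : 2 ≤ (G.erase u).card := by
        have := Finset.card_erase_of_mem hu
        omega
      obtain ⟨z₁, hz₁, z₂, hz₂, hz12⟩ := Finset.one_lt_card.1 (by omega : 1 < (G.erase u).card)
      obtain ⟨hz₁u, hz₁G⟩ := Finset.mem_erase.1 hz₁
      obtain ⟨hz₂u, hz₂G⟩ := Finset.mem_erase.1 hz₂
      have hGF : G ⊆ F := hG ▸ argmaxF_subset F q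
      obtain ⟨i, hi⟩ : ∃ i, z₁ i ≠ z₂ i := by
        by_contra hno; push_neg at hno; exact hz12 (funext hno)
      -- one of z₁, z₂ differs from u at i, the other agrees
      have hkey : ∃ z z', z ∈ G.erase u ∧ z' ∈ G.erase u ∧ z i ≠ u i ∧ z' i = u i := by
        by_cases h1 : z₁ i = u i
        · exact ⟨z₂, z₁, hz₂, hz₁, fun hc => hi (h1.trans hc.symm), h1⟩
        · by_cases h2' : z₂ i = u i
          · exact ⟨z₁, z₂, hz₁, hz₂, h1, h2'⟩
          · exfalso
            rcases hF u (hGF hu) i with hu0 | hu0 <;>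
              rcases hF z₁ (hGF hz₁G) i with h10 | h10 <;>
              rcases hF z₂ (hGF hz₂G) i with h20 | h20 <;>
              simp_all
      obtain ⟨z, z', hzE, hz'E, hzi, hz'i⟩ := hkey
      obtain ⟨hzu, hzG⟩ := Finset.mem_erase.1 hzE
      obtain ⟨hz'u, hz'G⟩ := Finset.mem_erase.1 hz'E
      set l : Fin d → ℝ := fun j => if j = i then 2 * z i - 1 else 0 with hl
      have hdl : ∀ x, dot l x = (2 * z i - 1) * x i := fun x => dot_coord i _ x
      have himp : dot l u < dot l z := by
        rw [hdl, hdl]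
        rcases hF u (hGF hu) i with hu0 | hu0 <;> rcases hF z (hGF hzG) i with hz0 | hz0
        · exact absurd (hz0.trans hu0.symm) hzi
        · rw [hu0, hz0]; norm_num
        · rw [hu0, hz0]; norm_num
        · exact absurd (hz0.trans hu0.symm) hzi
      obtain ⟨q', G', hq', hG'sub, huG', ⟨zimp, hzimpG', hzimpl⟩, hstrict⟩ :=
        shoot hF hne hG hu ⟨z, hzG, himp⟩
      have hz'notin : z' ∉ G' := by
        intro hc
        have := hstrict z' hc hz'u
        rw [hdl, hdl, hz'i] at this
        exact lt_irrefl _ this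
      have hcard' : G'.card ≤ n := by
        have := Finset.card_lt_card
          ((Finset.ssubset_iff_of_subset hG'sub).2 ⟨z', hz'G, hz'notin⟩)
        omega
      have h2' : 2 ≤ G'.card := by
        have hzimpu : zimp ≠ u := by
          rintro rfl; exact lt_irrefl _ hzimpl
        exact Finset.one_lt_card.2 ⟨u, huG', zimp, hzimpG', Ne.symm hzimpu⟩
      obtain ⟨w, hwG', hwu, hedge⟩ := ih G' q' hq' hcard' u huG' h2'
      exact ⟨w, hG'sub hwG', hwu, hedge⟩

/-- Improving edge lemma: from any vertex of a face which does not maximize `l`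
on the face, there is an edge to a face vertex with strictly larger `l`-value. -/
lemma improving_edge (hF : ∀ x ∈ F, zo x) (hne : F.Nonempty) :
    ∀ (n : ℕ) (G : Finset (Fin d → ℝ)) (q : Fin d → ℝ), argmaxF F q = G → G.card ≤ n →
    ∀ u ∈ G, ∀ (l : Fin d → ℝ), (∃ v ∈ G, dot l u < dot l v) →
    ∃ z ∈ G, IsEdgeOf (convexHull ℝ (F : Set (Fin d → ℝ))) u z ∧ dot l u < dot l z := by
  intro n
  induction n with
  | zero =>
    intro G q hG hcard u hu l hv
    have : G.card ≠ 0 := Finset.card_ne_zero_of_mem hu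
    omega
  | succ n ih =>
    intro G q hG hcard u hu l hv
    obtain ⟨q', G', hq', hG'sub, huG', himp', hstrict⟩ := shoot hF hne hG hu hv
    by_cases hA : ∃ y ∈ G, y ≠ u ∧ dot l y ≤ dot l u
    · obtain ⟨y, hyG, hyu, hyl⟩ := hA
      have hynot : y ∉ G' := by
        intro hc
        exact absurd (hstrict y hc hyu) (not_lt.2 hyl)
      have hcard' : G'.card ≤ n := by
        have := Finset.card_lt_card
          ((Finset.ssubset_iff_of_subset hG'sub).2 ⟨y, hyG, hynot⟩)
        omega
      obtain ⟨w, hwG', hedge, hwl⟩ := ih G' q' hq' hcard' u huG' l himp'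
      exact ⟨w, hG'sub hwG', hedge, hwl⟩
    · push_neg at hA
      obtain ⟨v, hvG, hvl⟩ := hv
      have hvu : v ≠ u := by rintro rfl; exact lt_irrefl _ hvl
      have h2 : 2 ≤ G.card := Finset.one_lt_card.2 ⟨u, hu, v, hvG, Ne.symm hvu⟩
      obtain ⟨w, hwG, hwu, hedge⟩ := face_edge hF hne (n+1) G q hG hcard u hu h2
      exact ⟨w, hwG, hedge, hA w hwG hwu⟩

/-- In a face containing points of `S` and of its complement, there is a cut edge. -/
lemma face_cut_edge (hF : ∀ x ∈ F, zo x) (hne : F.Nonempty) (S : Set (Fin d → ℝ))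
    {G : Finset (Fin d → ℝ)} {q : Fin d → ℝ} (hG : argmaxF F q = G)
    {v : Fin d → ℝ} (hvG : v ∈ G) (hvS : v ∉ S) :
    ∀ (n : ℕ) (u : Fin d → ℝ), u ∈ G → u ∈ S →
      (G.filter (fun y => dot (chi v) u < dot (chi v) y)).card ≤ n →
    ∃ z z', z ∈ G ∧ z' ∈ G ∧ z ∈ S ∧ z' ∉ S ∧
      IsEdgeOf (convexHull ℝ (F : Set (Fin d → ℝ))) z z' := by
  classical
  have hGF : G ⊆ F := hG ▸ argmaxF_subset F q
  intro n
  induction n with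
  | zero =>
    intro u huG huS hcard
    exfalso
    have huv : u ≠ v := by rintro rfl; exact hvS huS
    have : v ∈ G.filter (fun y => dot (chi v) u < dot (chi v) y) :=
      Finset.mem_filter.2 ⟨hvG, chi_lt (hF v (hGF hvG)) (hF u (hGF huG)) huv⟩
    have := Finset.card_ne_zero_of_mem this
    omega
  | succ n ih =>
    intro u huG huS hcard
    have huv : u ≠ v := by rintro rfl; exact hvS huS
    have himp : ∃ w ∈ G, dot (chi v) u < dot (chi v) w :=
      ⟨v, hvG, chi_lt (hF v (hGF hvG)) (hF u (hGF huG)) huv⟩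
    obtain ⟨z, hzG, hedge, hzl⟩ :=
      improving_edge hF hne (G.card) G q hG le_rfl u huG (chi v) himp
    by_cases hzS : z ∈ S
    · -- recurse from z; the strict upper set shrinks
      have hsub : G.filter (fun y => dot (chi v) z < dot (chi v) y)
          ⊆ G.filter (fun y => dot (chi v) u < dot (chi v) y) := by
        intro y hy
        obtain ⟨hyG, hyl⟩ := Finset.mem_filter.1 hy
        exact Finset.mem_filter.2 ⟨hyG, lt_trans hzl hyl⟩
      have hzmem : z ∈ G.filter (fun y => dot (chi v) u < dot (chi v) y) :=
        Finset.mem_filter.2 ⟨hzG, hzl⟩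
      have hznot : z ∉ G.filter (fun y => dot (chi v) z < dot (chi v) y) := by
        intro hc
        exact lt_irrefl _ (Finset.mem_filter.1 hc).2
      have := Finset.card_lt_card
        ((Finset.ssubset_iff_of_subset hsub).2 ⟨z, hzmem, hznot⟩)
      exact ih z hzG hzS (by omega)
    · exact ⟨u, z, huG, hzG, huS, hzS, hedge⟩

end Improve

section Cube

def flipQ {k : ℕ} (j : Fin k) (w : Fin k → Fin 2) : Fin k → Fin 2 :=
  Function.update w j (w j + 1)

lemma flipQ_apply_self {k : ℕ} (j : Fin k) (w : Fin k → Fin 2) : flipQ j w j = w j + 1 := by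
  simp [flipQ]

lemma flipQ_apply_ne {k : ℕ} {j j' : Fin k} (h : j' ≠ j) (w : Fin k → Fin 2) :
    flipQ j w j' = w j' := by
  simp [flipQ, Function.update_of_ne h]

lemma fin2_add_one_ne (b : Fin 2) : b + 1 ≠ b := by fin_cases b <;> decide

lemma flipQ_ne {k : ℕ} (j : Fin k) (w : Fin k → Fin 2) : flipQ j w ≠ w := by
  intro h
  have := congrFun h j
  rw [flipQ_apply_self] at this
  exact fin2_add_one_ne (w j) this

def cutQ {k : ℕ} (A : Finset (Fin k → Fin 2)) : ℕ :=
  ∑ w ∈ A, (Finset.univ.filter (fun j => flipQ j w ∉ A)).card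

lemma cube_card (k : ℕ) : Fintype.card (Fin k → Fin 2) = 2 ^ k := by
  rw [Fintype.card_fun]
  simp

lemma sum_slice {k : ℕ} (A : Finset (Fin (k+1) → Fin 2)) (b : Fin 2)
    (f : (Fin (k+1) → Fin 2) → ℕ) :
    ∑ y ∈ A.filter (fun y => y (Fin.last k) = b), f y
      = ∑ x ∈ Finset.univ.filter (fun x => Fin.snoc x b ∈ A), f (Fin.snoc x b) := by
  classical
  refine Finset.sum_bij' (fun y _ => Fin.init y) (fun x _ => Fin.snoc x b)
    ?hi ?hj ?li ?ri ?hval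
  case hi =>
    intro y hy
    obtain ⟨hyA, hyb⟩ := Finset.mem_filter.1 hy
    refine Finset.mem_filter.2 ⟨Finset.mem_univ _, ?_⟩
    rw [show Fin.snoc (Fin.init y) b = y by rw [← hyb]; exact Fin.snoc_init_self y]
    exact hyA
  case hj =>
    intro x hx
    obtain ⟨_, hxA⟩ := Finset.mem_filter.1 hx
    exact Finset.mem_filter.2 ⟨hxA, Fin.snoc_last _ _⟩
  case li =>
    intro y hy
    obtain ⟨hyA, hyb⟩ := Finset.mem_filter.1 hy
    have h := Fin.snoc_init_self y
    rw [hyb] at h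
    simpa using h
  case ri =>
    intro x hx
    simpa using Fin.init_snoc b x
  case hval =>
    intro y hy
    obtain ⟨hyA, hyb⟩ := Finset.mem_filter.1 hy
    rw [show Fin.snoc (Fin.init y) b = y by rw [← hyb]; exact Fin.snoc_init_self y]

/-- Edge-isoperimetry of the hypercube. -/
lemma cube_expansion : ∀ (k : ℕ) (A : Finset (Fin k → Fin 2)),
    min A.card (2 ^ k - A.card) ≤ cutQ A := by
  intro k
  induction k with
  | zero =>
    intro A
    have h1 : A.card ≤ 1 := by
      have h0 := Finset.card_le_univ A
      rw [cube_card 0, pow_zero] at h0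
      exact h0
    omega
  | succ k ih =>
    intro A
    classical
    obtain ⟨Ab, hmemAb⟩ : ∃ AB : Fin 2 → Finset (Fin k → Fin 2),
        ∀ (b : Fin 2) (x : Fin k → Fin 2), x ∈ AB b ↔ Fin.snoc x b ∈ A :=
      ⟨fun b => Finset.univ.filter (fun x => Fin.snoc x b ∈ A), by
        intro b x; simp⟩
    have hAbeq : ∀ b : Fin 2, Ab b = Finset.univ.filter (fun x => Fin.snoc x b ∈ A) :=
      fun b => Finset.ext (fun x => by simp [hmemAb])
    have hfin2 : ∀ a : Fin 2, (¬ a = 0) ↔ a = 1 := by decide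
    have hcards : ∀ b : Fin 2, (A.filter (fun y => y (Fin.last k) = b)).card = (Ab b).card := by
      intro b
      rw [Finset.card_eq_sum_ones, sum_slice A b (fun _ => 1), hAbeq b,
        ← Finset.card_eq_sum_ones]
    have hcardA : A.card = (Ab 0).card + (Ab 1).card := by
      have hsplit : (A.filter (fun y => y (Fin.last k) = 0)).card
          + (A.filter (fun y => ¬ y (Fin.last k) = 0)).card = A.card :=
        Finset.card_filter_add_card_filter_not _
      have heq : A.filter (fun y => ¬ y (Fin.last k) = 0)
          = A.filter (fun y => y (Fin.last k) = 1) :=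
        Finset.filter_congr (fun y _ => hfin2 _)
      rw [heq] at hsplit
      rw [← hcards 0, ← hcards 1]
      exact hsplit.symm
    have hAbcard : ∀ b : Fin 2, (Ab b).card ≤ 2 ^ k := by
      intro b
      have h1 := Finset.card_le_univ (Ab b)
      have h2 : (Finset.univ : Finset (Fin k → Fin 2)).card = 2 ^ k := by
        rw [Finset.card_univ, cube_card k]
      rw [cube_card k] at h1
      exact h1
    have hflip_cast : ∀ (x : Fin k → Fin 2) (b : Fin 2) (j : Fin k),
        flipQ j.castSucc (Fin.snoc x b) = Fin.snoc (flipQ j x) b := by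
      intro x b j
      unfold flipQ
      rw [Fin.snoc_update, Fin.snoc_castSucc]
    have hflip_last : ∀ (x : Fin k → Fin 2) (b : Fin 2),
        flipQ (Fin.last k) (Fin.snoc x b) = Fin.snoc x (b + 1) := by
      intro x b
      unfold flipQ
      rw [Fin.update_snoc_last, Fin.snoc_last]
    have hdeg : ∀ (b : Fin 2) (x : Fin k → Fin 2),
        (Finset.univ.filter (fun j => flipQ j (Fin.snoc x b) ∉ A)).card
        = (Finset.univ.filter (fun j => flipQ j x ∉ Ab b)).card
          + (if x ∉ Ab (b + 1) then 1 else 0) := by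
      intro b x
      rw [Finset.card_filter, Finset.card_filter, Fin.sum_univ_castSucc]
      congr 1
      · apply Finset.sum_congr rfl
        intro j _
        have hiff : (flipQ j.castSucc (Fin.snoc x b) ∉ A) ↔ (flipQ j x ∉ Ab b) := by
          rw [hflip_cast]
          exact (not_congr (hmemAb b (flipQ j x))).symm
        exact if_congr hiff rfl rfl
      · have hiff2 : (flipQ (Fin.last k) (Fin.snoc x b) ∉ A) ↔ (x ∉ Ab (b + 1)) := by
          rw [hflip_last]
          exact (not_congr (hmemAb (b + 1) x)).symm
        exact if_congr hiff2 rfl rfl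
    have hcut : ∀ b : Fin 2, ∑ y ∈ A.filter (fun y => y (Fin.last k) = b),
        (Finset.univ.filter (fun j => flipQ j y ∉ A)).card
        = cutQ (Ab b) + ((Ab b) \ (Ab (b + 1))).card := by
      intro b
      rw [sum_slice A b (fun y => (Finset.univ.filter (fun j => flipQ j y ∉ A)).card),
        ← hAbeq b]
      have hsd : ((Ab b) \ (Ab (b+1))).card
          = ∑ x ∈ Ab b, (if x ∉ Ab (b + 1) then 1 else 0) := by
        rw [← Finset.card_filter]
        congr 1
        rw [Finset.sdiff_eq_filter]
      rw [hsd, cutQ, ← Finset.sum_add_distrib]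
      apply Finset.sum_congr rfl
      intro x _
      exact hdeg b x
    have hcutA : cutQ A = cutQ (Ab 0) + cutQ (Ab 1)
        + (((Ab 0) \ (Ab 1)).card + ((Ab 1) \ (Ab 0)).card) := by
      rw [cutQ]
      rw [← Finset.sum_filter_add_sum_filter_not A (fun y => y (Fin.last k) = 0)]
      have hfilter1 : A.filter (fun y => ¬ y (Fin.last k) = 0)
          = A.filter (fun y => y (Fin.last k) = 1) :=
        Finset.filter_congr (fun y _ => hfin2 _)
      rw [hfilter1, hcut 0, hcut 1]
      have e1 : (0 : Fin 2) + 1 = 1 := by decide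
      have e2 : (1 : Fin 2) + 1 = 0 := by decide
      rw [e1, e2]
      ring
    have hsd0 : (Ab 0).card - (Ab 1).card ≤ ((Ab 0) \ (Ab 1)).card :=
      Finset.le_card_sdiff _ _
    have hsd1 : (Ab 1).card - (Ab 0).card ≤ ((Ab 1) \ (Ab 0)).card :=
      Finset.le_card_sdiff _ _
    have h0 := ih (Ab 0)
    have h1 := ih (Ab 1)
    have hA0 := hAbcard 0
    have hA1 := hAbcard 1
    have hpow : 2 ^ (k + 1) = 2 ^ k + 2 ^ k := by ring
    omega

end Cube

section Proj

lemma fin2_cases : ∀ a : Fin 2, a = 0 ∨ a = 1 := by decide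

lemma fin2_cast_zero : ((0 : Fin 2) : ℝ) = 0 := by simp

lemma fin2_cast_one : ((1 : Fin 2) : ℝ) = 1 := by simp

lemma fin2_cast_inj : ∀ a b : Fin 2, (a : ℝ) = (b : ℝ) → a = b := by
  intro a b h
  rcases fin2_cases a with h1 | h1 <;> rcases fin2_cases b with h2 | h2 <;>
    subst h1 <;> subst h2 <;> simp_all

variable {k : ℕ} {F : Finset (Fin d → ℝ)} (ι : Fin k → Fin d)

/-- The projection functional associated to active coordinates `J` and cube point `w`. -/
def qproj (ι : Fin k → Fin d) (J : Finset (Fin k)) (w : Fin k → Fin 2) : Fin d → ℝ :=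
  fun i => ∑ j ∈ J, if ι j = i then 2 * ((w j : ℝ)) - 1 else 0

lemma dot_qproj (J : Finset (Fin k)) (w : Fin k → Fin 2) (x : Fin d → ℝ) :
    dot (qproj ι J w) x = ∑ j ∈ J, (2 * ((w j : ℝ)) - 1) * x (ι j) := by
  unfold dot qproj
  have e1 : ∀ i : Fin d, (∑ j ∈ J, if ι j = i then 2 * ((w j : ℝ)) - 1 else 0) * x i
      = ∑ j ∈ J, (if ι j = i then (2 * ((w j : ℝ)) - 1) * x i else 0) := by
    intro i
    rw [Finset.sum_mul]
    apply Finset.sum_congr rfl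
    intro j _
    rw [ite_mul, zero_mul]
  rw [Finset.sum_congr rfl (fun i _ => e1 i), Finset.sum_comm]
  apply Finset.sum_congr rfl
  intro j _
  rw [Finset.sum_ite_eq]
  simp

lemma qproj_term_le {x : Fin d → ℝ} (hx : zo x) (w : Fin k → Fin 2) (j : Fin k) :
    (2 * ((w j : ℝ)) - 1) * x (ι j) ≤ (2 * ((w j : ℝ)) - 1) * ((w j : ℝ)) := by
  rcases fin2_cases (w j) with h | h <;> rw [h] <;> rcases hx (ι j) with h' | h' <;>
    rw [h'] <;> simp

lemma qproj_term_eq {x : Fin d → ℝ} (hx : zo x) (w : Fin k → Fin 2) (j : Fin k)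
    (h : (2 * ((w j : ℝ)) - 1) * x (ι j) = (2 * ((w j : ℝ)) - 1) * ((w j : ℝ))) :
    x (ι j) = (w j : ℝ) := by
  rcases fin2_cases (w j) with hw | hw <;> rw [hw] at h ⊢ <;>
    rcases hx (ι j) with h' | h' <;> rw [h'] at h ⊢ <;> simp_all <;> norm_num at h

/-- The fiber over the sub-cube determined by `J` and `w` is an argmax set. -/
lemma argmax_qproj (hF : ∀ x ∈ F, zo x) (J : Finset (Fin k)) (w : Fin k → Fin 2)
    (hne' : (F.filter (fun x => ∀ j ∈ J, x (ι j) = (w j : ℝ))).Nonempty) :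
    argmaxF F (qproj ι J w) = F.filter (fun x => ∀ j ∈ J, x (ι j) = (w j : ℝ)) := by
  classical
  obtain ⟨v₀, hv₀⟩ := hne'
  obtain ⟨hv₀F, hv₀w⟩ := Finset.mem_filter.1 hv₀
  have hdotv₀ : dot (qproj ι J w) v₀ = ∑ j ∈ J, (2 * ((w j : ℝ)) - 1) * ((w j : ℝ)) := by
    rw [dot_qproj]
    exact Finset.sum_congr rfl (fun j hj => by rw [hv₀w j hj])
  have hub : ∀ x ∈ F, dot (qproj ι J w) x
      ≤ ∑ j ∈ J, (2 * ((w j : ℝ)) - 1) * ((w j : ℝ)) := by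
    intro x hxF
    rw [dot_qproj]
    exact Finset.sum_le_sum (fun j _ => qproj_term_le ι (hF x hxF) w j)
  have hiff : ∀ x ∈ F, (dot (qproj ι J w) x
      = ∑ j ∈ J, (2 * ((w j : ℝ)) - 1) * ((w j : ℝ))) ↔ (∀ j ∈ J, x (ι j) = (w j : ℝ)) := by
    intro x hxF
    rw [dot_qproj]
    constructor
    · intro h
      have := (Finset.sum_eq_sum_iff_of_le
        (fun j _ => qproj_term_le ι (hF x hxF) w j)).1 h
      intro j hj
      exact qproj_term_eq ι (hF x hxF) w j (this j hj)
    · intro h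
      exact Finset.sum_congr rfl (fun j hj => by rw [h j hj])
  ext y
  constructor
  · intro hy
    obtain ⟨hyF, hymax⟩ := Finset.mem_filter.1 hy
    refine Finset.mem_filter.2 ⟨hyF, ?_⟩
    apply (hiff y hyF).1
    have h1 : dot (qproj ι J w) v₀ ≤ dot (qproj ι J w) y := hymax v₀ hv₀F
    have h2 := hub y hyF
    rw [hdotv₀] at h1
    linarith
  · intro hy
    obtain ⟨hyF, hyw⟩ := Finset.mem_filter.1 hy
    refine Finset.mem_filter.2 ⟨hyF, fun z hzF => ?_⟩
    have h1 := hub z hzF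
    have h2 : dot (qproj ι J w) y = ∑ j ∈ J, (2 * ((w j : ℝ)) - 1) * ((w j : ℝ)) :=
      (hiff y hyF).2 hyw
    rw [h2]
    exact h1

end Proj

lemma edge_symm {P : Set (Fin d → ℝ)} {u v : Fin d → ℝ} (h : IsEdgeOf P u v) :
    IsEdgeOf P v u := by
  obtain ⟨hne, c, c0, hub, heq⟩ := h
  exact ⟨hne.symm, c, c0, hub, by rw [segment_symm]; exact heq⟩

lemma fin2_cast_flip0 : ((0 + 1 : Fin 2) : ℝ) = 1 := by
  rw [show (0 + 1 : Fin 2) = 1 from rfl]; simp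

lemma fin2_cast_flip1 : ((1 + 1 : Fin 2) : ℝ) = 0 := by
  rw [show (1 + 1 : Fin 2) = 0 from rfl]; simp

lemma flipQ_inj_j {k : ℕ} {j j' : Fin k} {w : Fin k → Fin 2}
    (h : flipQ j w = flipQ j' w) : j = j' := by
  by_contra hne
  have h1 := congrFun h j
  rw [flipQ_apply_self, flipQ_apply_ne (Ne.symm (fun hc => hne hc.symm))] at h1
  exact fin2_add_one_ne (w j) h1

/-- Projection lemma: if `P ⊂ ℝ^d` is a 0/1 polytope and there are `k` coordinates
(given by an injection `ι : Fin k → Fin d`) such that the projection onto these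
coordinates hits every vertex of the `k`-cube and every vertex of the `k`-cube has
at most `c` preimage vertices of `P`, then the edge expansion of the graph of `P`
is at least `1/(2c)`. -/
theorem projection_lemma
    (d k c : ℕ) (F : Finset (Fin d → ℝ)) (hF : ∀ x ∈ F, ∀ i, x i = 0 ∨ x i = 1)
    (P : Set (Fin d → ℝ)) (hP : P = convexHull ℝ (F : Set (Fin d → ℝ)))
    (ι : Fin k → Fin d) (hι : Function.Injective ι)
    (hsurj : ∀ w : Fin k → Fin 2, ∃ v, IsVertexOf P v ∧ ∀ i, v (ι i) = (w i : ℝ))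
    (hfiber : ∀ w : Fin k → Fin 2,
      {v | IsVertexOf P v ∧ ∀ i, v (ι i) = (w i : ℝ)}.ncard ≤ c) :
    ExpansionAtLeast P (1 / (2 * c)) := by
  classical
  subst hP
  -- F is nonempty
  obtain ⟨v₀, hv₀vert, hv₀w⟩ := hsurj (fun _ => 0)
  have hv₀P : v₀ ∈ convexHull ℝ (F : Set (Fin d → ℝ)) := by
    obtain ⟨cc, c₀, hub, heq⟩ := hv₀vert
    have hmem : v₀ ∈ ({v₀} : Set (Fin d → ℝ)) := rfl
    rw [heq] at hmem
    exact hmem.1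
  have hne : F.Nonempty := by
    by_contra hc
    rw [Finset.not_nonempty_iff_eq_empty] at hc
    rw [hc] at hv₀P
    simp at hv₀P
  have hzo : ∀ x ∈ F, zo x := hF
  have hverts := polyVerts_eq hzo hne
  have hvmem : ∀ v, IsVertexOf (convexHull ℝ (F : Set (Fin d → ℝ))) v ↔ v ∈ F :=
    fun v => ⟨fun h => isVertexOf_mem hzo hne h, fun h => mem_isVertexOf hzo h⟩
  -- fibers
  obtain ⟨Xw, hXmem⟩ : ∃ Xf : (Fin k → Fin 2) → Finset (Fin d → ℝ),
      ∀ w v, v ∈ Xf w ↔ (v ∈ F ∧ ∀ i, v (ι i) = (w i : ℝ)) :=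
    ⟨fun w => F.filter (fun v => ∀ i, v (ι i) = (w i : ℝ)), fun w v => by simp⟩
  have hfib_set : ∀ w, {v | IsVertexOf (convexHull ℝ (F : Set (Fin d → ℝ))) v ∧
      ∀ i, v (ι i) = (w i : ℝ)} = (↑(Xw w) : Set (Fin d → ℝ)) := by
    intro w
    ext v
    simp only [Set.mem_setOf_eq, Finset.mem_coe, hXmem, hvmem]
  have hXne : ∀ w, (Xw w).Nonempty := by
    intro w
    obtain ⟨v, hv, hvw⟩ := hsurj w
    exact ⟨v, (hXmem w v).2 ⟨(hvmem v).1 hv, hvw⟩⟩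
  have hXcard : ∀ w, (Xw w).card ≤ c := by
    intro w
    have h := hfiber w
    rw [hfib_set w, Set.ncard_coe_finset] at h
    exact h
  have hc1 : 1 ≤ c := by
    have h1 := hXcard (fun _ => 0)
    have h2 := Finset.card_pos.2 (hXne (fun _ => 0))
    omega
  have hXdisj : ∀ w w' v, v ∈ Xw w → v ∈ Xw w' → w = w' := by
    intro w w' v h1 h2
    funext i
    apply fin2_cast_inj
    rw [← ((hXmem w v).1 h1).2 i, ← ((hXmem w' v).1 h2).2 i]
  have hXface : ∀ w, argmaxF F (qproj ι Finset.univ w) = Xw w := by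
    intro w
    have hne' : (F.filter (fun x => ∀ j ∈ Finset.univ, x (ι j) = (w j : ℝ))).Nonempty := by
      obtain ⟨v, hv⟩ := hXne w
      exact ⟨v, Finset.mem_filter.2 ⟨((hXmem w v).1 hv).1,
        fun j _ => ((hXmem w v).1 hv).2 j⟩⟩
    rw [argmax_qproj ι hzo Finset.univ w hne']
    ext v
    rw [Finset.mem_filter, hXmem]
    constructor
    · rintro ⟨h1, h2⟩; exact ⟨h1, fun i => h2 i (Finset.mem_univ i)⟩
    · rintro ⟨h1, h2⟩; exact ⟨h1, fun i _ => h2 i⟩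
  -- membership of a vertex in some fiber
  have hsig : ∀ v ∈ F, ∃ w, v ∈ Xw w := by
    intro v hv
    refine ⟨fun i => if v (ι i) = 1 then 1 else 0, (hXmem _ _).2 ⟨hv, fun i => ?_⟩⟩
    rcases hzo v hv (ι i) with h | h <;> simp [h]
  -- now take S
  intro S hS hSne hS2
  obtain ⟨SF, hSFmem⟩ : ∃ G : Finset (Fin d → ℝ), ∀ v, v ∈ G ↔ (v ∈ F ∧ v ∈ S) :=
    ⟨F.filter (· ∈ S), fun v => by simp⟩
  have hScoe : (SF : Set (Fin d → ℝ)) = S := by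
    ext v
    simp only [Finset.mem_coe, hSFmem]
    constructor
    · exact fun h => h.2
    · intro hv
      refine ⟨?_, hv⟩
      have := hS hv
      rw [hverts] at this
      exact this
  have hSncard : S.ncard = SF.card := by rw [← hScoe, Set.ncard_coe_finset]
  have hS2' : 2 * SF.card ≤ F.card := by
    rw [hverts, Set.ncard_coe_finset, hSncard] at hS2
    exact hS2
  have hSFsub : SF ⊆ F := fun v hv => ((hSFmem v).1 hv).1
  -- classes of cube points
  set In := Finset.univ.filter (fun w : Fin k → Fin 2 => Xw w ⊆ SF) with hIn
  set Nin := Finset.univ.filter (fun w : Fin k → Fin 2 => ¬ Xw w ⊆ SF) with hNin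
  set Split := Finset.univ.filter
    (fun w : Fin k → Fin 2 => ¬ Xw w ⊆ SF ∧ (Xw w ∩ SF).Nonempty) with hSplit
  have hInmem : ∀ w, w ∈ In ↔ Xw w ⊆ SF := by intro w; simp [hIn]
  have hSplitmem : ∀ w, w ∈ Split ↔ (¬ Xw w ⊆ SF ∧ (Xw w ∩ SF).Nonempty) := by
    intro w; simp [hSplit]
  have hcard_part : In.card + Nin.card = 2 ^ k := by
    have h := Finset.card_filter_add_card_filter_not
      (s := (Finset.univ : Finset (Fin k → Fin 2))) (fun w => Xw w ⊆ SF)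
    rw [Finset.card_univ, cube_card] at h
    exact h
  have hSplit_sub : Split ⊆ Nin := by
    intro w hw
    rw [hSplitmem] at hw
    rw [hNin, Finset.mem_filter]
    exact ⟨Finset.mem_univ _, hw.1⟩
  -- counting bounds
  have hSF_In : SF.card ≤ c * (In.card + Split.card) := by
    have hsub : SF ⊆ (In ∪ Split).biUnion Xw := by
      intro v hv
      obtain ⟨w, hvw⟩ := hsig v (hSFsub hv)
      refine Finset.mem_biUnion.2 ⟨w, ?_, hvw⟩
      by_cases hcase : Xw w ⊆ SF
      · exact Finset.mem_union_left _ ((hInmem w).2 hcase)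
      · exact Finset.mem_union_right _ ((hSplitmem w).2
          ⟨hcase, ⟨v, Finset.mem_inter.2 ⟨hvw, hv⟩⟩⟩)
    calc SF.card ≤ ((In ∪ Split).biUnion Xw).card := Finset.card_le_card hsub
      _ ≤ ∑ w ∈ In ∪ Split, (Xw w).card := Finset.card_biUnion_le
      _ ≤ (In ∪ Split).card * c := by
          have := Finset.sum_le_card_nsmul (In ∪ Split) (fun w => (Xw w).card) c
            (fun w _ => hXcard w)
          simpa [smul_eq_mul] using this
      _ ≤ (In.card + Split.card) * c :=
          Nat.mul_le_mul_right c (Finset.card_union_le _ _)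
      _ = c * (In.card + Split.card) := Nat.mul_comm _ _
  have hSF_Nin : F.card - SF.card ≤ c * Nin.card := by
    have hsub : F \ SF ⊆ Nin.biUnion Xw := by
      intro v hv
      obtain ⟨hvF, hvSF⟩ := Finset.mem_sdiff.1 hv
      obtain ⟨w, hvw⟩ := hsig v hvF
      refine Finset.mem_biUnion.2 ⟨w, ?_, hvw⟩
      rw [hNin, Finset.mem_filter]
      exact ⟨Finset.mem_univ _, fun hsub' => hvSF (hsub' hvw)⟩
    calc F.card - SF.card = (F \ SF).card := (Finset.card_sdiff_of_subset hSFsub).symm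
      _ ≤ (Nin.biUnion Xw).card := Finset.card_le_card hsub
      _ ≤ ∑ w ∈ Nin, (Xw w).card := Finset.card_biUnion_le
      _ ≤ Nin.card * c := by
          have := Finset.sum_le_card_nsmul Nin (fun w => (Xw w).card) c
            (fun w _ => hXcard w)
          simpa [smul_eq_mul] using this
      _ = c * Nin.card := Nat.mul_comm _ _
  -- existence of a cut pair inside each split fiber
  have hsplit_ex : ∀ w ∈ Split, ∃ p : (Fin d → ℝ) × (Fin d → ℝ),
      p.1 ∈ Xw w ∧ p.2 ∈ Xw w ∧ p.1 ∈ S ∧ p.2 ∉ S ∧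
      IsEdgeOf (convexHull ℝ (F : Set (Fin d → ℝ))) p.1 p.2 := by
    intro w hw
    rw [hSplitmem] at hw
    obtain ⟨hnotsub, u, hu⟩ := hw
    obtain ⟨huX, huSF⟩ := Finset.mem_inter.1 hu
    have huS : u ∈ S := ((hSFmem u).1 huSF).2
    obtain ⟨v, hvX, hvSF⟩ := Finset.not_subset.1 hnotsub
    have hvS : v ∉ S := fun hc => hvSF ((hSFmem v).2 ⟨((hXmem w v).1 hvX).1, hc⟩)
    obtain ⟨z, z', hz, hz', hzS, hz'S, hedge⟩ :=
      face_cut_edge hzo hne S (hXface w) hvX hvS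
        ((Xw w).filter (fun y => dot (chi v) u < dot (chi v) y)).card u huX huS le_rfl
    exact ⟨(z, z'), hz, hz', hzS, hz'S, hedge⟩
  -- existence of a crossing cut pair for each cut cube edge out of In
  have hcross_ex : ∀ (w : Fin k → Fin 2) (j : Fin k), w ∈ In → flipQ j w ∉ In →
      ∃ p : (Fin d → ℝ) × (Fin d → ℝ),
      p.1 ∈ Xw w ∧ p.2 ∈ Xw (flipQ j w) ∧ p.1 ∈ S ∧ p.2 ∉ S ∧
      IsEdgeOf (convexHull ℝ (F : Set (Fin d → ℝ))) p.1 p.2 := by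
    intro w j hwIn hw'In
    have hnotsub : ¬ Xw (flipQ j w) ⊆ SF := fun hc => hw'In ((hInmem _).2 hc)
    obtain ⟨v, hvX, hvSF⟩ := Finset.not_subset.1 hnotsub
    have hvF : v ∈ F := ((hXmem _ v).1 hvX).1
    have hvS : v ∉ S := fun hc => hvSF ((hSFmem v).2 ⟨hvF, hc⟩)
    -- the pair face
    have hpair_ne : (F.filter (fun x => ∀ j' ∈ Finset.univ.erase j,
        x (ι j') = (w j' : ℝ))).Nonempty := by
      obtain ⟨v1, hv1⟩ := hXne w
      exact ⟨v1, Finset.mem_filter.2 ⟨((hXmem w v1).1 hv1).1,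
        fun j' _ => ((hXmem w v1).1 hv1).2 j'⟩⟩
    have hface := argmax_qproj ι hzo (Finset.univ.erase j) w hpair_ne
    have hXsubG : ∀ x ∈ Xw w, x ∈ F.filter (fun x => ∀ j' ∈ Finset.univ.erase j,
        x (ι j') = (w j' : ℝ)) := by
      intro x hx
      exact Finset.mem_filter.2 ⟨((hXmem w x).1 hx).1, fun j' _ => ((hXmem w x).1 hx).2 j'⟩
    have hX'subG : ∀ x ∈ Xw (flipQ j w), x ∈ F.filter (fun x => ∀ j' ∈ Finset.univ.erase j,
        x (ι j') = (w j' : ℝ)) := by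
      intro x hx
      refine Finset.mem_filter.2 ⟨((hXmem _ x).1 hx).1, fun j' hj' => ?_⟩
      have hj'j : j' ≠ j := (Finset.mem_erase.1 hj').1
      rw [((hXmem _ x).1 hx).2 j', flipQ_apply_ne hj'j]
    have hGX : ∀ x ∈ F.filter (fun x => ∀ j' ∈ Finset.univ.erase j,
        x (ι j') = (w j' : ℝ)), x ∈ Xw w ∨ x ∈ Xw (flipQ j w) := by
      intro x hx
      obtain ⟨hxF, hxw⟩ := Finset.mem_filter.1 hx
      by_cases hcase : x (ι j) = (w j : ℝ)
      · left
        refine (hXmem w x).2 ⟨hxF, fun i => ?_⟩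
        by_cases hij : i = j
        · subst hij; exact hcase
        · exact hxw i (Finset.mem_erase.2 ⟨hij, Finset.mem_univ _⟩)
      · right
        have hval : x (ι j) = ((w j + 1 : Fin 2) : ℝ) := by
          rcases fin2_cases (w j) with h | h <;>
            rcases hzo x hxF (ι j) with h' | h' <;>
            rw [h] at hcase ⊢ <;> rw [h'] at hcase ⊢
          · exact absurd fin2_cast_zero.symm hcase
          · rw [fin2_cast_flip0]
          · rw [fin2_cast_flip1]
          · exact absurd fin2_cast_one.symm hcase
        refine (hXmem _ x).2 ⟨hxF, fun i => ?_⟩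
        by_cases hij : i = j
        · subst hij; rw [flipQ_apply_self]; exact hval
        · rw [flipQ_apply_ne hij]
          exact hxw i (Finset.mem_erase.2 ⟨hij, Finset.mem_univ _⟩)
    -- the improving functional
    have hdl : ∀ x : Fin d → ℝ,
        dot (fun i => if i = ι j then 2 * ((w j : ℝ)) - 1 else 0) x
          = (2 * ((w j : ℝ)) - 1) * x (ι j) := fun x => dot_coord (ι j) _ x
    have hvG := hX'subG v hvX
    obtain ⟨v1, hv1X⟩ := hXne w
    have hv1G := hXsubG v1 hv1X
    have hvcoord : v (ι j) = ((w j + 1 : Fin 2) : ℝ) := by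
      have := ((hXmem _ v).1 hvX).2 j
      rwa [flipQ_apply_self] at this
    have hv1coord : v1 (ι j) = (w j : ℝ) := ((hXmem w v1).1 hv1X).2 j
    have himp : dot (fun i => if i = ι j then 2 * ((w j : ℝ)) - 1 else 0) v
        < dot (fun i => if i = ι j then 2 * ((w j : ℝ)) - 1 else 0) v1 := by
      rw [hdl, hdl, hvcoord, hv1coord]
      rcases fin2_cases (w j) with h | h <;> rw [h] <;>
        simp [fin2_cast_flip0, fin2_cast_flip1] <;> norm_num
    obtain ⟨z, hzG, hedge, hzl⟩ := improving_edge hzo hne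
      (F.filter (fun x => ∀ j' ∈ Finset.univ.erase j, x (ι j') = (w j' : ℝ))).card
      _ _ hface le_rfl v hvG _ ⟨v1, hv1G, himp⟩
    have hzX : z ∈ Xw w := by
      rcases hGX z hzG with h | h
      · exact h
      · exfalso
        have hzcoord : z (ι j) = ((w j + 1 : Fin 2) : ℝ) := by
          have := ((hXmem _ z).1 h).2 j
          rwa [flipQ_apply_self] at this
        rw [hdl, hdl, hvcoord, hzcoord] at hzl
        exact lt_irrefl _ hzl
    have hzS : z ∈ S := by
      have hsub : Xw w ⊆ SF := (hInmem w).1 hwIn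
      exact ((hSFmem z).1 (hsub hzX)).2
    exact ⟨(z, v), hzX, hvX, hzS, hvS, edge_symm hedge⟩
  -- choice functions
  have hsplit_choice : ∀ w : Fin k → Fin 2, ∃ p : (Fin d → ℝ) × (Fin d → ℝ),
      w ∈ Split → (p.1 ∈ Xw w ∧ p.2 ∈ Xw w ∧ p.1 ∈ S ∧ p.2 ∉ S ∧
        IsEdgeOf (convexHull ℝ (F : Set (Fin d → ℝ))) p.1 p.2) := by
    intro w
    by_cases h : w ∈ Split
    · obtain ⟨p, hp⟩ := hsplit_ex w h
      exact ⟨p, fun _ => hp⟩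
    · exact ⟨((fun _ => 0), (fun _ => 0)), fun hc => absurd hc h⟩
  choose φs hφs using hsplit_choice
  have hcross_choice : ∀ (w : Fin k → Fin 2) (j : Fin k),
      ∃ p : (Fin d → ℝ) × (Fin d → ℝ),
      (w ∈ In ∧ flipQ j w ∉ In) → (p.1 ∈ Xw w ∧ p.2 ∈ Xw (flipQ j w) ∧ p.1 ∈ S ∧ p.2 ∉ S ∧
        IsEdgeOf (convexHull ℝ (F : Set (Fin d → ℝ))) p.1 p.2) := by
    intro w j
    by_cases h : w ∈ In ∧ flipQ j w ∉ In
    · obtain ⟨p, hp⟩ := hcross_ex w j h.1 h.2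
      exact ⟨p, fun _ => hp⟩
    · exact ⟨((fun _ => 0), (fun _ => 0)), fun hc => absurd hc h⟩
  choose φc hφc using hcross_choice
  -- the two finsets of cut pairs
  set T1 := Split.image φs with hT1
  set T2 := In.biUnion (fun w =>
    (Finset.univ.filter (fun j : Fin k => flipQ j w ∉ In)).image (φc w)) with hT2
  have hT1card : T1.card = Split.card := by
    rw [hT1]
    apply Finset.card_image_of_injOn
    intro w hw w' hw' heq
    have h1 := hφs w hw
    have h2 := hφs w' hw'
    exact hXdisj w w' (φs w).1 h1.1 (heq ▸ h2.1)
  have hT2card : T2.card = cutQ In := by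
    rw [hT2, Finset.card_biUnion, cutQ]
    · apply Finset.sum_congr rfl
      intro w hw
      apply Finset.card_image_of_injOn
      intro j hj j' hj' heq
      have hj1 := (Finset.mem_filter.1 hj).2
      have hj2 := (Finset.mem_filter.1 hj').2
      have h1 := hφc w j ⟨hw, hj1⟩
      have h2 := hφc w j' ⟨hw, hj2⟩
      exact flipQ_inj_j (hXdisj _ _ (φc w j).2 h1.2.1 (heq ▸ h2.2.1))
    · intro w hw w' hw' hne'
      rw [Function.onFun, Finset.disjoint_left]
      intro p hp hp'
      obtain ⟨j, hj, hjp⟩ := Finset.mem_image.1 hp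
      obtain ⟨j', hj', hjp'⟩ := Finset.mem_image.1 hp'
      have h1 := hφc w j ⟨hw, (Finset.mem_filter.1 hj).2⟩
      have h2 := hφc w' j' ⟨hw', (Finset.mem_filter.1 hj').2⟩
      exact hne' (hXdisj w w' p.1 (hjp ▸ h1.1) (hjp' ▸ h2.1))
  have hT12 : Disjoint T1 T2 := by
    rw [Finset.disjoint_left]
    intro p hp hp'
    rw [hT1] at hp
    obtain ⟨w, hw, hwp⟩ := Finset.mem_image.1 hp
    have h1 := hφs w hw
    rw [hT2] at hp'
    obtain ⟨w', hw', hp2⟩ := Finset.mem_biUnion.1 hp'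
    obtain ⟨j, hj, hjp⟩ := Finset.mem_image.1 hp2
    have h2 := hφc w' j ⟨hw', (Finset.mem_filter.1 hj).2⟩
    have e1 : w = w' := hXdisj w w' p.1 (hwp ▸ h1.1) (hjp ▸ h2.1)
    have e2 : w = flipQ j w' := hXdisj w _ p.2 (hwp ▸ h1.2.1) (hjp ▸ h2.2.1)
    rw [← e1] at e2
    exact flipQ_ne j w e2.symm
  have hTcard : (T1 ∪ T2).card = Split.card + cutQ In := by
    rw [Finset.card_union_of_disjoint hT12, hT1card, hT2card]
  -- cut set bounds
  have hTsub : ((T1 ∪ T2 : Finset ((Fin d → ℝ) × (Fin d → ℝ))) : Set ((Fin d → ℝ) × (Fin d → ℝ)))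
      ⊆ {e : (Fin d → ℝ) × (Fin d → ℝ) |
        IsEdgeOf (convexHull ℝ (F : Set (Fin d → ℝ))) e.1 e.2 ∧ e.1 ∈ S ∧ e.2 ∉ S} := by
    intro p hp
    rw [Finset.mem_coe, Finset.mem_union] at hp
    rcases hp with hp | hp
    · rw [hT1] at hp
      obtain ⟨w, hw, hwp⟩ := Finset.mem_image.1 hp
      have h1 := hφs w hw
      rw [← hwp]
      exact ⟨h1.2.2.2.2, h1.2.2.1, h1.2.2.2.1⟩
    · rw [hT2] at hp
      obtain ⟨w, hw, hp2⟩ := Finset.mem_biUnion.1 hp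
      obtain ⟨j, hj, hjp⟩ := Finset.mem_image.1 hp2
      have h2 := hφc w j ⟨hw, (Finset.mem_filter.1 hj).2⟩
      rw [← hjp]
      exact ⟨h2.2.2.2.2, h2.2.2.1, h2.2.2.2.1⟩
  have hfin : {e : (Fin d → ℝ) × (Fin d → ℝ) |
      IsEdgeOf (convexHull ℝ (F : Set (Fin d → ℝ))) e.1 e.2 ∧ e.1 ∈ S ∧ e.2 ∉ S}.Finite := by
    apply Set.Finite.subset (Set.Finite.prod F.finite_toSet F.finite_toSet)
    intro p hp
    obtain ⟨hedge, _, _⟩ := hp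
    obtain ⟨h1, h2⟩ := edge_endpoints hne hedge
    exact ⟨h1, h2⟩
  have hcut_ge : Split.card + cutQ In
      ≤ cutCard (convexHull ℝ (F : Set (Fin d → ℝ))) S := by
    rw [cutCard, ← hTcard, ← Set.ncard_coe_finset]
    exact Set.ncard_le_ncard hTsub hfin
  -- cube isoperimetry and final count
  have hcube := cube_expansion k In
  have hkey : SF.card ≤ c * cutCard (convexHull ℝ (F : Set (Fin d → ℝ))) S := by
    obtain ⟨a, ha⟩ : ∃ n, In.card = n := ⟨_, rfl⟩
    obtain ⟨sp, hsp⟩ : ∃ n, Split.card = n := ⟨_, rfl⟩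
    obtain ⟨nn, hnn⟩ : ∃ n, Nin.card = n := ⟨_, rfl⟩
    obtain ⟨qq, hqq⟩ : ∃ n, cutQ In = n := ⟨_, rfl⟩
    obtain ⟨E, hE⟩ : ∃ n, cutCard (convexHull ℝ (F : Set (Fin d → ℝ))) S = n := ⟨_, rfl⟩
    obtain ⟨m, hm⟩ : ∃ n, SF.card = n := ⟨_, rfl⟩
    obtain ⟨Fc, hFc⟩ : ∃ n, F.card = n := ⟨_, rfl⟩
    rw [ha, hqq] at hcube
    rw [ha, hnn] at hcard_part
    have hsN : sp ≤ nn := by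
      rw [← hsp, ← hnn]
      exact Finset.card_le_card hSplit_sub
    rw [hm, ha, hsp] at hSF_In
    rw [hFc, hm, hnn] at hSF_Nin
    rw [hm, hFc] at hS2'
    rw [hsp, hqq, hE] at hcut_ge
    rw [hm, hE]
    obtain ⟨cn, hcn⟩ : ∃ t, c * nn = t := ⟨_, rfl⟩
    rw [hcn] at hSF_Nin
    have hcase : a ≤ qq ∨ nn ≤ qq := by omega
    rcases hcase with hcc | hcc
    · calc m ≤ c * (a + sp) := hSF_In
        _ ≤ c * (sp + qq) := Nat.mul_le_mul le_rfl (by omega)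
        _ ≤ c * E := Nat.mul_le_mul le_rfl hcut_ge
    · have h3 : m ≤ cn := by omega
      calc m ≤ cn := h3
        _ = c * nn := hcn.symm
        _ ≤ c * (sp + qq) := Nat.mul_le_mul le_rfl (by omega)
        _ ≤ c * E := Nat.mul_le_mul le_rfl hcut_ge
  -- conclude over the reals
  rw [hSncard]
  have hc0 : (0:ℝ) < (c:ℝ) := by
    have : 0 < c := by omega
    exact_mod_cast this
  have hcast : (SF.card : ℝ)
      ≤ (c:ℝ) * (cutCard (convexHull ℝ (F : Set (Fin d → ℝ))) S : ℝ) := by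
    exact_mod_cast hkey
  have hE0 : (0:ℝ) ≤ (cutCard (convexHull ℝ (F : Set (Fin d → ℝ))) S : ℝ) :=
    Nat.cast_nonneg _
  rw [div_mul_eq_mul_div, one_mul, div_le_iff₀ (by positivity)]
  nlinarith [mul_nonneg (le_of_lt hc0) hE0]
end
end
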